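/- arXiv:1512.07043 — 8 statements merged into one kernel-verified Lean document; each statement's English description precedes it below -/
import Mathlib

section
/- A Metzler matrix A is Hurwitz stable if and only if there exists a vector v with all entries positive such that vᵀA has all entries negative. -/
open Matrix

def IsMetzler {n : ℕ} (A : Matrix (Fin n) (Fin n) ℝ) : Prop :=
  ∀ i j, i ≠ j → 0 ≤ A i j

def IsHurwitz {n : ℕ} (A : Matrix (Fin n) (Fin n) ℝ) : Prop :=
  ∀ μ ∈ spectrum ℂ (A.map (Complex.ofReal)), μ.re < 0

attribute [local instance] Matrix.linftyOpNormedRing Matrix.linftyOpNormedAlgebra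

namespace MetzlerAux

lemma mem_spec_iff {n : ℕ} (M : Matrix (Fin n) (Fin n) ℂ) (z : ℂ) :
    z ∈ spectrum ℂ M ↔ (z • (1 : Matrix (Fin n) (Fin n) ℂ) - M).det = 0 := by
  rw [spectrum.mem_iff, Algebra.algebraMap_eq_smul_one, Matrix.isUnit_iff_isUnit_det,
    isUnit_iff_ne_zero, not_ne_iff]

lemma entry_norm_le {n : ℕ} (M : Matrix (Fin n) (Fin n) ℂ) (i j : Fin n) :
    ‖M i j‖ ≤ ‖M‖ := by
  have h1 : ‖M i j‖₊ ≤ ∑ k, ‖M i k‖₊ :=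
    Finset.single_le_sum (f := fun k => ‖M i k‖₊) (fun k _ => zero_le) (Finset.mem_univ j)
  have h2 : (∑ k, ‖M i k‖₊) ≤ ‖M‖₊ := by
    rw [Matrix.linfty_opNNNorm_def]
    exact Finset.le_sup (f := fun i => ∑ k, ‖M i k‖₊) (Finset.mem_univ i)
  exact_mod_cast h1.trans h2

/-- The easy direction: a Metzler matrix with a positive vector `v` such that
`vᵀA < 0` is Hurwitz. -/
lemma hurwitz_of_vec {n : ℕ} (A : Matrix (Fin n) (Fin n) ℝ) (hM : IsMetzler A)
    (v : Fin n → ℝ) (hv : ∀ i, 0 < v i) (hvA : ∀ j, (v ᵥ* A) j < 0) : IsHurwitz A := by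
  intro μ hμ
  rw [mem_spec_iff] at hμ
  have hdet : ((μ • (1 : Matrix (Fin n) (Fin n) ℂ) - A.map Complex.ofReal)ᵀ).det = 0 := by
    rw [Matrix.det_transpose]; exact hμ
  obtain ⟨x, hx0, hx⟩ := Matrix.exists_mulVec_eq_zero_iff.mpr hdet
  have key : ∀ j, ∑ i, (A i j : ℂ) * x i = μ * x j := by
    intro j
    have h := congrFun hx j
    simp only [Matrix.mulVec, dotProduct, Matrix.transpose_apply, Matrix.sub_apply,
      Matrix.smul_apply, Matrix.one_apply, Matrix.map_apply, smul_eq_mul, Pi.zero_apply,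
      sub_mul, mul_ite, mul_one, mul_zero, ite_mul, zero_mul] at h
    rw [Finset.sum_sub_distrib, Finset.sum_ite_eq' Finset.univ j (fun i => μ * x i)] at h
    simp only [Finset.mem_univ, if_true] at h
    linear_combination -h
  -- pick an index maximizing |x j| / v j
  obtain ⟨k, hk⟩ := Function.ne_iff.mp hx0
  obtain ⟨j, -, hjmax⟩ := Finset.exists_max_image Finset.univ
    (fun i => ‖x i‖ / v i) ⟨k, Finset.mem_univ k⟩
  set c : ℝ := ‖x j‖ / v j with hc_def
  have hc : 0 < c := by
    have h1 : 0 < ‖x k‖ / v k :=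
      div_pos (by simpa using hk) (hv k)
    exact lt_of_lt_of_le h1 (hjmax k (Finset.mem_univ k))
  have hb : ∀ i, ‖x i‖ ≤ c * v i := by
    intro i
    have := hjmax i (Finset.mem_univ i)
    calc ‖x i‖ = (‖x i‖ / v i) * v i :=
          (div_mul_cancel₀ _ (hv i).ne').symm
      _ ≤ c * v i := mul_le_mul_of_nonneg_right this (hv i).le
  have hxj : ‖x j‖ = c * v j := (div_mul_cancel₀ _ (hv j).ne').symm
  set a : ℝ := A j j with ha_def
  -- the off-diagonal identity
  have heq : (μ - (a : ℂ)) * x j = ∑ i ∈ Finset.univ.erase j, (A i j : ℂ) * x i := by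
    have h := key j
    rw [← Finset.add_sum_erase _ _ (Finset.mem_univ j)] at h
    linear_combination -h
  -- column sum bound from hvA
  have hcol : ∑ i ∈ Finset.univ.erase j, A i j * v i < -(a * v j) := by
    have h := hvA j
    simp only [Matrix.vecMul, dotProduct] at h
    rw [← Finset.add_sum_erase _ _ (Finset.mem_univ j)] at h
    have : ∑ i ∈ Finset.univ.erase j, v i * A i j < -(v j * A j j) := by linarith
    calc ∑ i ∈ Finset.univ.erase j, A i j * v i
        = ∑ i ∈ Finset.univ.erase j, v i * A i j := by
          apply Finset.sum_congr rfl; intros; ring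
      _ < -(v j * A j j) := this
      _ = -(a * v j) := by rw [ha_def]; ring
  -- norm estimate
  have hstep : ‖μ - (a : ℂ)‖ * (c * v j) < (-a) * (c * v j) := by
    calc ‖μ - (a : ℂ)‖ * (c * v j)
        = ‖(μ - (a : ℂ)) * x j‖ := by rw [norm_mul, hxj]
      _ = ‖∑ i ∈ Finset.univ.erase j, (A i j : ℂ) * x i‖ := by rw [heq]
      _ ≤ ∑ i ∈ Finset.univ.erase j, ‖(A i j : ℂ) * x i‖ := by
          exact norm_sum_le _ _
      _ ≤ ∑ i ∈ Finset.univ.erase j, A i j * (c * v i) := by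
          apply Finset.sum_le_sum
          intro i hi
          have hij : i ≠ j := Finset.ne_of_mem_erase hi
          have hA : 0 ≤ A i j := hM i j hij
          rw [norm_mul, Complex.norm_real, Real.norm_eq_abs, abs_of_nonneg hA]
          exact mul_le_mul_of_nonneg_left (hb i) hA
      _ = c * ∑ i ∈ Finset.univ.erase j, A i j * v i := by
          rw [Finset.mul_sum]; apply Finset.sum_congr rfl; intros; ring
      _ < c * (-(a * v j)) := by
          apply mul_lt_mul_of_pos_left hcol hc
      _ = (-a) * (c * v j) := by ring
  have habs : ‖μ - (a : ℂ)‖ < -a :=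
    lt_of_mul_lt_mul_right hstep (mul_pos hc (hv j)).le
  have hre : μ.re - a ≤ ‖μ - (a : ℂ)‖ := by
    have := Complex.re_le_norm (μ - (a : ℂ))
    simpa using this
  linarith

end MetzlerAux

namespace MetzlerAux

open Filter Topology Finset

lemma exists_vec_of_hurwitz {n : ℕ} (A : Matrix (Fin n) (Fin n) ℝ) (hM : IsMetzler A)
    (hH : IsHurwitz A) :
    ∃ v : Fin n → ℝ, (∀ i, 0 < v i) ∧ ∀ j, (v ᵥ* A) j < 0 := by
  rcases Nat.eq_zero_or_pos n with hn | hn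
  · subst hn
    exact ⟨fun _ => 1, fun i => i.elim0, fun j => j.elim0⟩
  haveI : NeZero n := ⟨hn.ne'⟩
  haveI : CompleteSpace (Matrix (Fin n) (Fin n) ℂ) := FiniteDimensional.complete ℂ _
  set Ac : Matrix (Fin n) (Fin n) ℂ := A.map Complex.ofReal with hAc_def
  -- every element of the spectrum has negative real part and is nonzero
  have hσre : ∀ μ ∈ spectrum ℂ Ac, μ.re < 0 := hH
  have hσne : ∀ μ ∈ spectrum ℂ Ac, μ ≠ 0 := by
    intro μ hμ h0
    have := hσre μ hμ
    rw [h0] at this; simp at this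
  -- choose ε > 0
  have hcpt := spectrum.isCompact (𝕜 := ℂ) Ac
  have hne : (spectrum ℂ Ac).Nonempty := spectrum.nonempty Ac
  set g : ℂ → ℝ := fun μ => (-(2 * μ.re)) / Complex.normSq μ with hg_def
  have hg0 : ∀ μ ∈ spectrum ℂ Ac, 0 < g μ := by
    intro μ hμ
    exact div_pos (by have := hσre μ hμ; linarith) (Complex.normSq_pos.mpr (hσne μ hμ))
  have hgc : ContinuousOn g (spectrum ℂ Ac) := by
    apply ContinuousOn.div
    · exact ((continuous_const.mul Complex.continuous_re).neg).continuousOn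
    · exact Complex.continuous_normSq.continuousOn
    · exact fun μ hμ => (Complex.normSq_pos.mpr (hσne μ hμ)).ne'
  obtain ⟨μ₀, hμ₀σ, hμ₀min⟩ := hcpt.exists_isMinOn hne hgc
  set d : ℝ := 1 / (1 + ∑ i, |A i i|) with hd_def
  have hsum_nn : (0:ℝ) ≤ ∑ i, |A i i| := Finset.sum_nonneg fun i _ => abs_nonneg _
  have hd : 0 < d := by rw [hd_def]; positivity
  set ε : ℝ := min (g μ₀ / 2) d with hε_def
  have hε : 0 < ε := lt_min (by have := hg0 μ₀ hμ₀σ; linarith) hd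
  have hεg : ∀ μ ∈ spectrum ℂ Ac, ε * Complex.normSq μ < -(2 * μ.re) := by
    intro μ hμ
    have h1 : ε < g μ := by
      have h2 : ε ≤ g μ₀ / 2 := min_le_left _ _
      have h3 : g μ₀ ≤ g μ := hμ₀min hμ
      have := hg0 μ₀ hμ₀σ
      linarith
    have hns : 0 < Complex.normSq μ := Complex.normSq_pos.mpr (hσne μ hμ)
    rw [hg_def] at h1
    exact (lt_div_iff₀ hns).mp h1
  have hεd : ∀ i, 0 ≤ 1 + ε * A i i := by
    intro i
    have h1 : |A i i| ≤ 1 + ∑ k, |A k k| := by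
      have := Finset.single_le_sum (f := fun k => |A k k|) (fun k _ => abs_nonneg _)
        (Finset.mem_univ i)
      linarith
    have h2 : ε * |A i i| ≤ 1 := by
      have hεle : ε ≤ d := min_le_right _ _
      have : ε * |A i i| ≤ d * |A i i| := mul_le_mul_of_nonneg_right hεle (abs_nonneg _)
      have hdle : d * |A i i| ≤ 1 := by
        rw [hd_def, div_mul_eq_mul_div, one_mul, div_le_one (by linarith)]
        exact h1
      linarith
    have : -(ε * |A i i|) ≤ ε * A i i := by
      have := neg_abs_le (A i i)
      nlinarith
    linarith
  -- the nonnegative matrix P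
  set P : Matrix (Fin n) (Fin n) ℝ := 1 + ε • A with hP_def
  have hP : ∀ i j, 0 ≤ P i j := by
    intro i j
    rw [hP_def]
    by_cases hij : i = j
    · subst hij
      simpa [Matrix.add_apply, Matrix.one_apply, Matrix.smul_apply, smul_eq_mul] using hεd i
    · have := hM i j hij
      simp only [Matrix.add_apply, Matrix.one_apply_ne hij, Matrix.smul_apply, smul_eq_mul,
        zero_add]
      positivity
  have hPpow : ∀ k i j, 0 ≤ (P ^ k) i j := by
    intro k
    induction k with
    | zero => intro i j; rw [pow_zero, Matrix.one_apply]; split <;> norm_num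
    | succ m ih =>
      intro i j
      rw [pow_succ, Matrix.mul_apply]
      exact Finset.sum_nonneg fun l _ => mul_nonneg (ih i l) (hP l j)
  set φ : Matrix (Fin n) (Fin n) ℝ →+* Matrix (Fin n) (Fin n) ℂ :=
    Complex.ofRealHom.mapMatrix with hφ_def
  set Pc : Matrix (Fin n) (Fin n) ℂ := φ P with hPc_def
  have hPc_entry : ∀ i j, Pc i j = (P i j : ℂ) := fun i j => rfl
  -- spectrum of Pc lies strictly inside the unit disc
  have hspec : ∀ z ∈ spectrum ℂ Pc, ‖z‖₊ < 1 := by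
    intro z hz
    rw [mem_spec_iff] at hz
    set μ : ℂ := (z - 1) / (ε : ℂ) with hμ_def
    have hεC : (ε : ℂ) ≠ 0 := by exact_mod_cast hε.ne'
    have hfact : z • (1 : Matrix (Fin n) (Fin n) ℂ) - Pc
        = (ε : ℂ) • (μ • (1 : Matrix (Fin n) (Fin n) ℂ) - Ac) := by
      ext i j
      simp only [Matrix.sub_apply, Matrix.smul_apply, hPc_entry, Matrix.one_apply, smul_eq_mul,
        hμ_def]
      have hPij : P i j = (1 : Matrix (Fin n) (Fin n) ℝ) i j + ε * A i j := rfl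
      rw [hPij]
      have hAcij : Ac i j = (A i j : ℂ) := rfl
      rw [hAcij, Matrix.one_apply]
      split_ifs <;> push_cast <;> field_simp <;> ring
    have hdetA : (μ • (1 : Matrix (Fin n) (Fin n) ℂ) - Ac).det = 0 := by
      rw [hfact, Matrix.det_smul] at hz
      have : ((ε : ℂ) ^ Fintype.card (Fin n)) ≠ 0 := pow_ne_zero _ hεC
      exact (mul_eq_zero.mp hz).resolve_left this
    have hμσ : μ ∈ spectrum ℂ Ac := (mem_spec_iff _ _).mpr hdetA
    have hre : μ.re < 0 := hσre μ hμσ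
    have hz_eq : z = 1 + (ε : ℂ) * μ := by
      rw [hμ_def]; field_simp; ring
    have hnsq : Complex.normSq z = 1 + ε * (2 * μ.re + ε * Complex.normSq μ) := by
      rw [hz_eq]
      simp [Complex.normSq_apply, Complex.add_re, Complex.add_im, Complex.mul_re, Complex.mul_im,
        Complex.one_re, Complex.one_im, Complex.ofReal_re, Complex.ofReal_im]
      ring
    have hlt : Complex.normSq z < 1 := by
      have := hεg μ hμσ
      nlinarith [hε]
    have habs : ‖z‖ < 1 := by
      have h1 : (‖z‖) ^ 2 < 1 := by rw [Complex.sq_norm]; exact hlt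
      nlinarith [norm_nonneg z]
    have : ‖z‖ < 1 := by exact habs
    exact_mod_cast this
  -- the spectral radius is < 1, so powers tend to zero
  have hρ : spectralRadius ℂ Pc < 1 := by
    have := spectrum.spectralRadius_lt_of_forall_lt Pc hspec
    simpa using this
  obtain ⟨r, hr1, hr2⟩ := ENNReal.lt_iff_exists_nnreal_btwn.mp hρ
  have hr2' : (r : ℝ) < 1 := by exact_mod_cast hr2
  have hG := spectrum.pow_norm_pow_one_div_tendsto_nhds_spectralRadius Pc
  have hev : ∀ᶠ (k : ℕ) in atTop, ENNReal.ofReal (‖Pc ^ k‖ ^ (1 / (k : ℝ))) < (r : ENNReal) :=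
    hG.eventually_lt_const hr1
  have hbound : ∀ᶠ (k : ℕ) in atTop, ‖Pc ^ k‖ ≤ (r : ℝ) ^ k := by
    filter_upwards [hev, eventually_ge_atTop 1] with k hk hk1
    have hkR : (0:ℝ) < (k : ℝ) := by exact_mod_cast hk1
    have h0 : (0:ℝ) ≤ ‖Pc ^ k‖ := norm_nonneg _
    have hklt : ‖Pc ^ k‖ ^ (1 / (k : ℝ)) < (r : ℝ) := by
      by_contra hcon
      push_neg at hcon
      have : (r : ENNReal) ≤ ENNReal.ofReal (‖Pc ^ k‖ ^ (1 / (k : ℝ))) := by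
        rw [← ENNReal.ofReal_coe_nnreal]
        exact ENNReal.ofReal_le_ofReal hcon
      exact absurd hk (not_lt.mpr this)
    have hrw : ‖Pc ^ k‖ = (‖Pc ^ k‖ ^ (1 / (k : ℝ))) ^ k := by
      rw [← Real.rpow_natCast (‖Pc ^ k‖ ^ (1 / (k : ℝ))) k, ← Real.rpow_mul h0,
        one_div_mul_cancel hkR.ne', Real.rpow_one]
    rw [hrw]
    exact pow_le_pow_left₀ (Real.rpow_nonneg h0 _) hklt.le k
  have hPk0 : Tendsto (fun k => Pc ^ k) atTop (𝓝 0) := by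
    refine tendsto_zero_iff_norm_tendsto_zero.mpr ?_
    exact squeeze_zero' (Eventually.of_forall fun k => norm_nonneg _) hbound
      (tendsto_pow_atTop_nhds_zero_of_lt_one r.coe_nonneg hr2')
  -- 1 - Pc is invertible
  have hunit : IsUnit ((1 : Matrix (Fin n) (Fin n) ℂ) - Pc) := by
    by_contra h
    have h1 : (1 : ℂ) ∈ spectrum ℂ Pc := by
      rw [spectrum.mem_iff, Algebra.algebraMap_eq_smul_one, one_smul]
      exact h
    have := hspec 1 h1
    simp at this
  obtain ⟨U, hU⟩ := hunit
  have hgeom : ∀ K : ℕ, (∑ k ∈ Finset.range K, Pc ^ k)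
      = (↑U⁻¹ : Matrix (Fin n) (Fin n) ℂ) * (1 - Pc ^ K) := by
    intro K
    have h1 := mul_neg_geom_sum Pc K
    calc (∑ k ∈ Finset.range K, Pc ^ k)
        = (↑U⁻¹ * ↑U) * (∑ k ∈ Finset.range K, Pc ^ k) := by rw [U.inv_mul, one_mul]
      _ = ↑U⁻¹ * ((1 - Pc) * (∑ k ∈ Finset.range K, Pc ^ k)) := by rw [mul_assoc, hU]
      _ = ↑U⁻¹ * (1 - Pc ^ K) := by rw [h1]
  have htend : Tendsto (fun K : ℕ => ∑ k ∈ Finset.range K, Pc ^ k) atTop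
      (𝓝 (↑U⁻¹ : Matrix (Fin n) (Fin n) ℂ)) := by
    have h2 : Tendsto (fun K : ℕ => (↑U⁻¹ : Matrix (Fin n) (Fin n) ℂ) * (1 - Pc ^ K)) atTop
        (𝓝 ((↑U⁻¹ : Matrix (Fin n) (Fin n) ℂ) * (1 - 0))) :=
      ((tendsto_const_nhds.sub hPk0).const_mul _)
    simp only [sub_zero, mul_one] at h2
    simp only [hgeom]
    exact h2
  -- the real inverse
  have hmap_sub : φ ((1 : Matrix (Fin n) (Fin n) ℝ) - P) = 1 - Pc := by
    rw [map_sub, _root_.map_one, hPc_def]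
  have hdet1P : IsUnit ((1 : Matrix (Fin n) (Fin n) ℝ) - P).det := by
    rw [isUnit_iff_ne_zero]
    intro h0
    have h1 : ((1 : Matrix (Fin n) (Fin n) ℂ) - Pc).det = 0 := by
      rw [← hmap_sub, hφ_def, ← RingHom.map_det, h0, _root_.map_zero]
    have h2 := (Matrix.isUnit_iff_isUnit_det _).mp ⟨U, hU⟩
    rw [h1] at h2
    exact (isUnit_iff_ne_zero.mp h2) rfl
  set R : Matrix (Fin n) (Fin n) ℝ := ((1 : Matrix (Fin n) (Fin n) ℝ) - P)⁻¹ with hR_def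
  have hR2 : R * ((1 : Matrix (Fin n) (Fin n) ℝ) - P) = 1 := Matrix.nonsing_inv_mul _ hdet1P
  have hR1 : ((1 : Matrix (Fin n) (Fin n) ℝ) - P) * R = 1 := Matrix.mul_nonsing_inv _ hdet1P
  have hUiR : (↑U⁻¹ : Matrix (Fin n) (Fin n) ℂ) = φ R := by
    have h3 : ((1 : Matrix (Fin n) (Fin n) ℂ) - Pc) * φ R = 1 := by
      rw [← hmap_sub, ← _root_.map_mul, hR1, _root_.map_one]
    calc (↑U⁻¹ : Matrix (Fin n) (Fin n) ℂ)
        = ↑U⁻¹ * (((1 : Matrix (Fin n) (Fin n) ℂ) - Pc) * φ R) := by rw [h3, mul_one]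
      _ = (↑U⁻¹ * ↑U) * φ R := by rw [← hU, mul_assoc]
      _ = φ R := by rw [U.inv_mul, one_mul]
  -- entries of R are nonnegative
  have hRnn : ∀ i j, 0 ≤ R i j := by
    intro i j
    have hent : Tendsto (fun K : ℕ => (∑ k ∈ Finset.range K, Pc ^ k) i j) atTop
        (𝓝 ((↑U⁻¹ : Matrix (Fin n) (Fin n) ℂ) i j)) := by
      rw [tendsto_iff_norm_sub_tendsto_zero]
      have h4 := tendsto_iff_norm_sub_tendsto_zero.mp htend
      apply squeeze_zero' (Eventually.of_forall fun K => norm_nonneg _)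
        (Eventually.of_forall fun K => ?_) h4
      have h5 : (∑ k ∈ Finset.range K, Pc ^ k) i j - (↑U⁻¹ : Matrix (Fin n) (Fin n) ℂ) i j
          = ((∑ k ∈ Finset.range K, Pc ^ k) - (↑U⁻¹ : Matrix (Fin n) (Fin n) ℂ)) i j := by
        rw [Matrix.sub_apply]
      rw [h5]
      exact entry_norm_le _ i j
    have hre : Tendsto (fun K : ℕ => ((∑ k ∈ Finset.range K, Pc ^ k) i j).re) atTop
        (𝓝 (((↑U⁻¹ : Matrix (Fin n) (Fin n) ℂ) i j).re)) :=
      (Complex.continuous_re.tendsto _).comp hent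
    have hval : ((↑U⁻¹ : Matrix (Fin n) (Fin n) ℂ) i j).re = R i j := by
      rw [hUiR]
      simp [hφ_def, RingHom.mapMatrix_apply, Matrix.map_apply]
    rw [← hval]
    apply ge_of_tendsto' hre
    intro K
    have h6 : (∑ k ∈ Finset.range K, Pc ^ k) i j = ((∑ k ∈ Finset.range K, (P ^ k) i j : ℝ) : ℂ) := by
      rw [Matrix.sum_apply]
      push_cast
      apply Finset.sum_congr rfl
      intro k _
      have : Pc ^ k = φ (P ^ k) := by rw [hPc_def, _root_.map_pow]
      rw [this]
      rfl
    rw [h6]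
    rw [Complex.ofReal_re]
    exact Finset.sum_nonneg fun k _ => hPpow k i j
  -- the matrix N = ε • R satisfies N * A = -1 and has nonnegative entries
  have h1P : (1 : Matrix (Fin n) (Fin n) ℝ) - P = (-ε) • A := by
    rw [hP_def]
    rw [neg_smul]
    abel
  set N : Matrix (Fin n) (Fin n) ℝ := ε • R with hN_def
  have hNnn : ∀ i j, 0 ≤ N i j := by
    intro i j
    rw [hN_def, Matrix.smul_apply, smul_eq_mul]
    exact mul_nonneg hε.le (hRnn i j)
  have hNA : N * A = -1 := by
    have h7 : R * ((-ε) • A) = 1 := by rw [← h1P]; exact hR2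
    rw [Matrix.mul_smul] at h7
    have h8 : R * A = (-ε)⁻¹ • (1 : Matrix (Fin n) (Fin n) ℝ) := by
      have hne' : (-ε) ≠ 0 := by simp [hε.ne']
      rw [← h7, smul_smul, inv_mul_cancel₀ hne', one_smul]
    rw [hN_def, Matrix.smul_mul, h8, smul_smul]
    have : ε * (-ε)⁻¹ = -1 := by field_simp
    rw [this, neg_smul, one_smul]
  have hAN : (-A) * N = 1 := by
    rw [mul_eq_one_comm]
    rw [Matrix.mul_neg, hNA]
    simp
  -- construct v
  refine ⟨fun j => ∑ i, N i j, ?_, ?_⟩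
  · intro j
    apply Finset.sum_pos' (fun i _ => hNnn i j)
    by_contra hcon
    push_neg at hcon
    have hc0 : ∀ i, N i j = 0 := fun i =>
      le_antisymm (hcon i (Finset.mem_univ i)) (hNnn i j)
    have h9 : ((-A) * N) j j = 1 := by rw [hAN, Matrix.one_apply_eq]
    rw [Matrix.mul_apply] at h9
    simp only [hc0, mul_zero, Finset.sum_const_zero] at h9
    exact zero_ne_one h9
  · intro j
    have h10 : (fun j => ∑ i, N i j) ᵥ* A = fun j => ∑ k, (N * A) k j := by
      ext j'
      simp only [Matrix.vecMul, dotProduct, Matrix.mul_apply]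
      rw [Finset.sum_comm]
      apply Finset.sum_congr rfl
      intro k _
      rw [Finset.sum_mul]
    rw [h10, hNA]
    show ∑ k, (-1 : Matrix (Fin n) (Fin n) ℝ) k j < 0
    have : ∑ k, (-1 : Matrix (Fin n) (Fin n) ℝ) k j = -1 := by
      simp only [Matrix.neg_apply, Matrix.one_apply]
      rw [Finset.sum_neg_distrib]
      rw [Finset.sum_ite_eq' Finset.univ j (fun _ => (1:ℝ))]
      simp
    rw [this]
    norm_num

end MetzlerAux

/-- A Metzler matrix is Hurwitz stable iff there is a positive vector `v`
with `vᵀA` componentwise negative. -/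
theorem metzler_hurwitz_iff_exists_pos_vec {n : ℕ} (A : Matrix (Fin n) (Fin n) ℝ)
    (hM : IsMetzler A) :
    IsHurwitz A ↔ ∃ v : Fin n → ℝ, (∀ i, 0 < v i) ∧ ∀ j, (v ᵥ* A) j < 0 := by
  constructor
  · exact fun h => MetzlerAux.exists_vec_of_hurwitz A hM h
  · rintro ⟨v, hv, hvA⟩
    exact MetzlerAux.hurwitz_of_vec A hM v hv hvA
end

section
/- Let M be an n×n Metzler matrix with entries in {−1,0,1}, negative diagonal, such that its directed graph contains a directed cycle. Then the spectral abscissa of M is nonnegative, so M is not Hurwitz stable. -/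
open Matrix

def EdgeRel {n : ℕ} (M : Matrix (Fin n) (Fin n) ℝ) (j i : Fin n) : Prop :=
  i ≠ j ∧ M i j ≠ 0

open Polynomial

variable {n : ℕ}

/-- Every monic complex polynomial of degree `n` factors through a root function. -/
lemma aux_exists_roots_fn : ∀ (n : ℕ) (p : Polynomial ℂ), p.Monic → p.natDegree = n →
    ∃ e : Fin n → ℂ, ∀ x : ℂ, p.eval x = ∏ i, (x - e i) := by
  intro n
  induction n with
  | zero =>
    intro p hm hd
    have hp1 : p = 1 := hm.natDegree_eq_zero.mp hd
    exact ⟨Fin.elim0, fun x => by simp [hp1]⟩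
  | succ n ih =>
    intro p hm hd
    have hdeg : 0 < p.degree := by
      have : p.natDegree ≠ 0 := by omega
      exact natDegree_pos_iff_degree_pos.mp (Nat.pos_of_ne_zero this)
    obtain ⟨z, hz⟩ := Complex.exists_root hdeg
    obtain ⟨q, hq⟩ := (dvd_iff_isRoot.mpr hz)
    have hqm : q.Monic := (monic_X_sub_C z).of_mul_monic_left (hq ▸ hm)
    have hqd : q.natDegree = n := by
      have hq0 : q ≠ 0 := hqm.ne_zero
      have := hd
      rw [hq, natDegree_mul (X_sub_C_ne_zero z) hq0, natDegree_X_sub_C] at this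
      omega
    obtain ⟨e, he⟩ := ih q hqm hqd
    refine ⟨Fin.cons z e, fun x => ?_⟩
    rw [hq, eval_mul, he, Fin.prod_univ_succ, Fin.cons_zero]
    simp [Fin.cons_succ]


variable {n : ℕ}

lemma aux_eval_charpoly (X : Matrix (Fin n) (Fin n) ℂ) (x : ℂ) :
    (X.charpoly).eval x = Matrix.det (x • (1 : Matrix (Fin n) (Fin n) ℂ) - X) := by
  rw [Matrix.charpoly, ← Polynomial.coe_evalRingHom, RingHom.map_det]
  congr 1
  ext i j
  by_cases h : i = j <;>
    simp [h, Matrix.charmatrix_apply, Matrix.sub_apply, Matrix.smul_apply, Matrix.one_apply,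
      Matrix.diagonal_apply]

lemma aux_exists_eigs (B : Matrix (Fin n) (Fin n) ℂ) :
    ∃ e : Fin n → ℂ, ∀ x : ℂ,
      Matrix.det (x • (1 : Matrix (Fin n) (Fin n) ℂ) - B) = ∏ i, (x - e i) := by
  obtain ⟨e, he⟩ := aux_exists_roots_fn n B.charpoly (Matrix.charpoly_monic B)
    (by simp [Matrix.charpoly_natDegree_eq_dim])
  exact ⟨e, fun x => by rw [← aux_eval_charpoly, he]⟩

lemma aux_mem_spectrum_iff (B : Matrix (Fin n) (Fin n) ℂ) (e : Fin n → ℂ)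
    (he : ∀ x : ℂ, Matrix.det (x • (1 : Matrix (Fin n) (Fin n) ℂ) - B) = ∏ i, (x - e i))
    (μ : ℂ) : μ ∈ spectrum ℂ B ↔ ∃ i, e i = μ := by
  rw [spectrum.mem_iff, Matrix.isUnit_iff_isUnit_det]
  have h1 : (algebraMap ℂ (Matrix (Fin n) (Fin n) ℂ)) μ - B
      = μ • (1 : Matrix (Fin n) (Fin n) ℂ) - B := by
    rw [Algebra.algebraMap_eq_smul_one]
  rw [h1, he μ, isUnit_iff_ne_zero, not_not, Finset.prod_eq_zero_iff]
  constructor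
  · rintro ⟨i, -, hi⟩; exact ⟨i, (sub_eq_zero.mp hi).symm⟩
  · rintro ⟨i, hi⟩; exact ⟨i, Finset.mem_univ i, sub_eq_zero.mpr hi.symm⟩

lemma aux_trace_pow (hn : 0 < n) (B : Matrix (Fin n) (Fin n) ℂ) (e : Fin n → ℂ)
    (he : ∀ x : ℂ, Matrix.det (x • (1 : Matrix (Fin n) (Fin n) ℂ) - B) = ∏ i, (x - e i))
    (m : ℕ) : (B ^ m).trace = ∑ i, e i ^ m := by
  have hnegprod : ∀ (f : Fin n → ℂ), (-1 : ℂ) ^ n * ∏ i, f i = ∏ i, (-(f i)) := by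
    intro f
    rw [show ((-1:ℂ)^n) = ∏ _i : Fin n, (-1:ℂ) by simp, ← Finset.prod_mul_distrib]
    exact Finset.prod_congr rfl fun i _ => by ring
  have hsingle : ∀ y : ℂ, Matrix.det (B - y • (1 : Matrix (Fin n) (Fin n) ℂ))
      = ∏ i, (e i - y) := by
    intro y
    rw [(neg_sub (y • (1 : Matrix (Fin n) (Fin n) ℂ)) B).symm, Matrix.det_neg, he y,
      Fintype.card_fin, hnegprod]
    exact Finset.prod_congr rfl fun i _ => by ring
  rcases Nat.eq_zero_or_pos m with hm | hm
  · subst hm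
    simp [Matrix.trace_one]
  -- key determinant identity for B ^ m
  have key : ∀ x : ℂ, Matrix.det (x • (1 : Matrix (Fin n) (Fin n) ℂ) - B ^ m)
      = ∏ i, (x - e i ^ m) := by
    intro x
    obtain ⟨ξ, hξ⟩ := aux_exists_roots_fn m (X ^ m - C x) (monic_X_pow_sub_C x hm.ne')
      (natDegree_X_pow_sub_C)
    have hξ' : ∀ y : ℂ, y ^ m - x = ∏ j, (y - ξ j) := by
      intro y
      have := hξ y
      simpa using this
    have hpoly : (X ^ m - C x : Polynomial ℂ) = (List.ofFn (fun j => X - C (ξ j))).prod := by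
      rw [List.prod_ofFn]
      apply Polynomial.funext
      intro r
      rw [eval_prod]
      simpa using hξ' r
    have hmat : B ^ m - x • (1 : Matrix (Fin n) (Fin n) ℂ)
        = (List.ofFn (fun j => B - ξ j • (1 : Matrix (Fin n) (Fin n) ℂ))).prod := by
      have h1 : Polynomial.aeval B (X ^ m - C x) = B ^ m - x • 1 := by
        simp [Algebra.algebraMap_eq_smul_one]
      rw [← h1, hpoly, map_list_prod, List.map_ofFn]
      have hfn : (⇑(aeval B) ∘ fun j => X - C (ξ j))
          = fun j => B - ξ j • (1 : Matrix (Fin n) (Fin n) ℂ) := by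
        funext j
        simp only [Function.comp_apply, map_sub, aeval_X, aeval_C,
          Algebra.algebraMap_eq_smul_one]
      rw [hfn]
    have hdet : Matrix.det (B ^ m - x • (1 : Matrix (Fin n) (Fin n) ℂ))
        = ∏ j, Matrix.det (B - ξ j • (1 : Matrix (Fin n) (Fin n) ℂ)) := by
      rw [hmat, ← Matrix.coe_detMonoidHom, MonoidHom.map_list_prod, List.map_ofFn,
        List.prod_ofFn]
      rfl
    have hdet2 : Matrix.det (B ^ m - x • (1 : Matrix (Fin n) (Fin n) ℂ))
        = ∏ i, (e i ^ m - x) := by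
      rw [hdet]
      calc ∏ j, Matrix.det (B - ξ j • (1 : Matrix (Fin n) (Fin n) ℂ))
          = ∏ j, ∏ i, (e i - ξ j) := Finset.prod_congr rfl fun j _ => hsingle (ξ j)
        _ = ∏ i, ∏ j, (e i - ξ j) := Finset.prod_comm
        _ = ∏ i, (e i ^ m - x) := Finset.prod_congr rfl fun i _ => (hξ' (e i)).symm
    rw [(neg_sub (B ^ m) (x • (1 : Matrix (Fin n) (Fin n) ℂ))).symm, Matrix.det_neg,
      Fintype.card_fin, hdet2, hnegprod]
    exact Finset.prod_congr rfl fun i _ => by ring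
  -- charpoly of B ^ m
  have hcp : (B ^ m).charpoly = ∏ i, (X - C (e i ^ m)) := by
    apply Polynomial.funext
    intro r
    rw [aux_eval_charpoly, key r, eval_prod]
    simp
  have : Nonempty (Fin n) := Fin.pos_iff_nonempty.mp hn
  rw [Matrix.trace_eq_neg_charpoly_coeff, hcp, Fintype.card_fin]
  have hcoeff := Polynomial.prod_X_sub_C_coeff_card_pred (Finset.univ : Finset (Fin n))
    (fun i => e i ^ m) (by simpa using hn)
  simp only [Finset.card_univ, Fintype.card_fin] at hcoeff
  rw [hcoeff, neg_neg]

lemma aux_hasSum (w : Fin n → ℂ) (t : ℝ) :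
    HasSum (fun m : ℕ => ((t : ℂ) ^ m / (Nat.factorial m : ℂ)) * ∑ i, w i ^ m)
      (∑ i, Complex.exp ((t : ℂ) * w i)) := by
  have h : ∀ i : Fin n, HasSum (fun m : ℕ => ((t : ℂ) * w i) ^ m / (Nat.factorial m : ℂ))
      (Complex.exp ((t : ℂ) * w i)) := by
    intro i
    rw [Complex.exp_eq_exp_ℂ]
    exact NormedSpace.expSeries_div_hasSum_exp _
  have h2 := hasSum_sum (s := (Finset.univ : Finset (Fin n)))
    (f := fun i m => ((t : ℂ) * w i) ^ m / (Nat.factorial m : ℂ))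
    (a := fun i => Complex.exp ((t : ℂ) * w i)) (fun i _ => h i)
  have h3 : (fun m : ℕ => ∑ i, ((t : ℂ) * w i) ^ m / (Nat.factorial m : ℂ))
      = fun m : ℕ => ((t : ℂ) ^ m / (Nat.factorial m : ℂ)) * ∑ i, w i ^ m := by
    funext m
    rw [Finset.mul_sum]
    exact Finset.sum_congr rfl fun i _ => by rw [mul_pow]; ring
  rwa [h3] at h2

lemma aux_pow_nonneg {A : Matrix (Fin n) (Fin n) ℝ} (hA : ∀ i j, 0 ≤ A i j) (m : ℕ) :
    ∀ i j, 0 ≤ (A ^ m) i j := by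
  induction m with
  | zero =>
    intro i j
    by_cases h : i = j <;> simp [pow_zero, Matrix.one_apply, h]
  | succ m ih =>
    intro i j
    rw [pow_succ, Matrix.mul_apply]
    exact Finset.sum_nonneg fun l _ => mul_nonneg (ih i l) (hA l j)

lemma aux_walk {M A : Matrix (Fin n) (Fin n) ℝ} (hA : ∀ i j, 0 ≤ A i j)
    (hedge : ∀ a b, EdgeRel M a b → 1 ≤ A b a) :
    ∀ a b, Relation.TransGen (EdgeRel M) a b → ∃ k, 1 ≤ k ∧ 1 ≤ (A ^ k) b a := by
  intro a b h
  induction h with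
  | single hab => exact ⟨1, le_refl 1, by simpa [pow_one] using hedge _ _ hab⟩
  | tail hab hbc ih =>
    obtain ⟨k, hk1, hk⟩ := ih
    refine ⟨k + 1, by omega, ?_⟩
    rw [pow_succ', Matrix.mul_apply]
    rename_i b' c'
    calc (1 : ℝ) ≤ A c' b' * (A ^ k) b' a := by
          have h1 := hedge _ _ hbc
          nlinarith [aux_pow_nonneg hA k b' a]
      _ ≤ ∑ j, A c' j * (A ^ k) j a :=
          Finset.single_le_sum
            (fun j _ => mul_nonneg (hA c' j) (aux_pow_nonneg hA k j a))
            (Finset.mem_univ b')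

lemma aux_diag_pow {A : Matrix (Fin n) (Fin n) ℝ} (hA : ∀ i j, 0 ≤ A i j) {k : ℕ} {i : Fin n}
    (h : 1 ≤ (A ^ k) i i) : ∀ m : ℕ, 1 ≤ m → 1 ≤ (A ^ (k * m)) i i := by
  intro m hm
  induction m with
  | zero => omega
  | succ m ih =>
    rcases Nat.eq_zero_or_pos m with h0 | h0
    · subst h0; simpa using h
    · have hkm := ih h0
      have hsplit : A ^ (k * (m + 1)) = A ^ (k * m) * A ^ k := by
        rw [← pow_add]; ring_nf
      rw [hsplit, Matrix.mul_apply]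
      calc (1 : ℝ) ≤ (A ^ (k * m)) i i * (A ^ k) i i := by
            nlinarith [aux_pow_nonneg hA (k*m) i i]
        _ ≤ ∑ j, (A ^ (k * m)) i j * (A ^ k) j i :=
            Finset.single_le_sum
              (fun j _ => mul_nonneg (aux_pow_nonneg hA (k*m) i j) (aux_pow_nonneg hA k j i))
              (Finset.mem_univ i)
lemma aux_gamma_tendsto (N : ℕ) :
    Filter.Tendsto (fun T : ℝ => ∫ t in (0:ℝ)..T, Real.exp (-t) * t ^ N)
      Filter.atTop (nhds (Nat.factorial N : ℝ)) := by
  have hint : MeasureTheory.IntegrableOn (fun x : ℝ => Real.exp (-x) * x ^ N) (Set.Ioi 0) := by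
    have h := Real.GammaIntegral_convergent (s := (N : ℝ) + 1) (by positivity)
    simpa [Real.rpow_natCast] using h
  have h1 := MeasureTheory.intervalIntegral_tendsto_integral_Ioi 0 hint Filter.tendsto_id
  have h2 : ∫ t in Set.Ioi (0:ℝ), Real.exp (-t) * t ^ N = (Nat.factorial N : ℝ) := by
    have h3 := Real.Gamma_eq_integral (s := (N : ℝ) + 1) (by positivity)
    simp only [add_sub_cancel_right, Real.rpow_natCast] at h3
    rw [← h3, ← Real.Gamma_nat_eq_factorial]
  rwa [h2] at h1

lemma aux_exp_integral {c : ℝ} (hc : c < 0) (T : ℝ) :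
    ∫ t in (0:ℝ)..T, Real.exp (c * t) ≤ 1 / (-c) := by
  have h1 : (fun t : ℝ => Real.exp (c * t)) = fun t => Real.exp (t * c) := by
    funext t; ring_nf
  rw [h1, intervalIntegral.integral_comp_mul_right Real.exp hc.ne, integral_exp]
  simp only [smul_eq_mul, zero_mul, Real.exp_zero]
  have hE : 0 < Real.exp (T * c) := Real.exp_pos _
  have hinv : c⁻¹ < 0 := inv_lt_zero.mpr hc
  have hprod : c⁻¹ * Real.exp (T * c) ≤ 0 := mul_nonpos_of_nonpos_of_nonneg hinv.le hE.le
  rw [one_div, inv_neg, mul_sub, mul_one]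
  linarith

/-- A Metzler matrix with entries in `{-1,0,1}`, negative diagonal, whose
directed graph contains a cycle, has nonnegative spectral abscissa and hence
is not Hurwitz stable. -/
theorem unit_metzler_cycle_not_hurwitz {n : ℕ} (M : Matrix (Fin n) (Fin n) ℝ)
    (hM : IsMetzler M) (hentries : ∀ i j, M i j = -1 ∨ M i j = 0 ∨ M i j = 1)
    (hdiag : ∀ i, M i i < 0)
    (hcycle : ∃ i : Fin n, Relation.TransGen (EdgeRel M) i i) :
    (∃ μ ∈ spectrum ℂ (M.map (Complex.ofReal)), 0 ≤ μ.re) ∧ ¬ IsHurwitz M := by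
  classical
  obtain ⟨i₀, hcyc⟩ := hcycle
  have hn : 0 < n := i₀.pos
  set B : Matrix (Fin n) (Fin n) ℂ := M.map (Complex.ofReal) with hBdef
  have main : ∃ μ ∈ spectrum ℂ B, 0 ≤ μ.re := by
    by_contra hcon
    push_neg at hcon
    obtain ⟨e, he⟩ := aux_exists_eigs B
    have hre : ∀ i, (e i).re < 0 := fun i => hcon _ ((aux_mem_spectrum_iff B e he (e i)).mpr ⟨i, rfl⟩)
    -- the nonnegative matrix A = M + 1
    set A : Matrix (Fin n) (Fin n) ℝ := M + 1 with hAdef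
    have hMdiag : ∀ i, M i i = -1 := by
      intro i
      rcases hentries i i with h | h | h
      · exact h
      · exact absurd (hdiag i) (by rw [h]; exact lt_irrefl 0)
      · exact absurd (hdiag i) (by rw [h]; norm_num)
    have hAnn : ∀ i j, 0 ≤ A i j := by
      intro i j
      by_cases h : i = j
      · subst h
        simp [hAdef, Matrix.add_apply, Matrix.one_apply_eq, hMdiag i]
      · have := hM i j h
        simp [hAdef, Matrix.add_apply, Matrix.one_apply_ne h]
        linarith
    have hedge : ∀ a b, EdgeRel M a b → 1 ≤ A b a := by
      intro a b hab
      obtain ⟨hne, hne0⟩ := hab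
      have h1 : M b a = 1 := by
        rcases hentries b a with h | h | h
        · exact absurd (hM b a hne) (by rw [h]; norm_num)
        · exact absurd h hne0
        · exact h
      simp [hAdef, Matrix.add_apply, Matrix.one_apply_ne hne, h1]
    obtain ⟨k, hk1, hki⟩ := aux_walk hAnn hedge i₀ i₀ hcyc
    -- complex lift
    have hmap : ∀ m : ℕ, ((A ^ m).map Complex.ofReal) = (B + 1) ^ m := by
      intro m
      set φ : Matrix (Fin n) (Fin n) ℝ →+* Matrix (Fin n) (Fin n) ℂ :=
        RingHom.mapMatrix Complex.ofRealHom with hφdef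
      have hφ : φ A = B + 1 := by
        rw [hAdef, map_add, _root_.map_one]
        rfl
      calc ((A ^ m).map Complex.ofReal)
          = φ (A ^ m) := rfl
        _ = (φ A) ^ m := map_pow _ _ _
        _ = (B + 1) ^ m := by rw [hφ]
    -- root function for B + 1
    have he1 : ∀ x : ℂ, Matrix.det (x • (1 : Matrix (Fin n) (Fin n) ℂ) - (B + 1))
        = ∏ i, (x - (e i + 1)) := by
      intro x
      have hre : x • (1 : Matrix (Fin n) (Fin n) ℂ) - (B + 1)
          = (x - 1) • (1 : Matrix (Fin n) (Fin n) ℂ) - B := by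
        rw [sub_smul, one_smul]
        abel
      rw [hre, he (x - 1)]
      exact Finset.prod_congr rfl fun i _ => by ring
    -- trace identity
    have htr : ∀ m : ℕ, (((A ^ m).trace : ℝ) : ℂ) = ∑ i, (e i + 1) ^ m := by
      intro m
      have h1 : ((B + 1) ^ m).trace = ∑ i, (e i + 1) ^ m := aux_trace_pow hn (B + 1) _ he1 m
      rw [← h1, ← hmap m]
      simp [Matrix.trace, Matrix.diag, Matrix.map_apply]
    -- real HasSum
    have hHS : ∀ t : ℝ, HasSum (fun m : ℕ => t ^ m / (Nat.factorial m : ℝ) * ((A ^ m).trace))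
        ((∑ i, Complex.exp ((t : ℂ) * (e i + 1))).re) := by
      intro t
      have h0 := (aux_hasSum (fun i => e i + 1) t).mapL Complex.reCLM
      have heq : (fun m : ℕ => Complex.reCLM (((t : ℂ) ^ m / (Nat.factorial m : ℂ)) * ∑ i, (e i + 1) ^ m))
          = fun m : ℕ => t ^ m / (Nat.factorial m : ℝ) * ((A ^ m).trace) := by
        funext m
        rw [← htr m]
        have h2 : ((t : ℂ) ^ m / (Nat.factorial m : ℂ)) * (((A ^ m).trace : ℝ) : ℂ)
            = ((t ^ m / (Nat.factorial m : ℝ) * ((A ^ m).trace) : ℝ) : ℂ) := by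
          push_cast
          ring
        rw [Complex.reCLM_apply, h2, Complex.ofReal_re]
      rwa [heq] at h0
    -- trace bounds
    have htrnn : ∀ m : ℕ, 0 ≤ (A ^ m).trace :=
      fun m => Finset.sum_nonneg fun i _ => aux_pow_nonneg hAnn m i i
    have htrk : ∀ m : ℕ, 1 ≤ m → 1 ≤ (A ^ (k * m)).trace := by
      intro m hm
      calc (1 : ℝ) ≤ (A ^ (k * m)) i₀ i₀ := aux_diag_pow hAnn hki m hm
        _ ≤ (A ^ (k * m)).trace :=
          Finset.single_le_sum (fun j _ => aux_pow_nonneg hAnn (k * m) j j) (Finset.mem_univ i₀)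
    -- constants
    set c : Fin n → ℝ := fun i => (e i).re with hcdef
    set Cc : ℝ := ∑ i, 1 / (-(c i)) with hCcdef
    have hCc0 : 0 ≤ Cc :=
      Finset.sum_nonneg fun i _ => one_div_nonneg.mpr (by have := hre i; simp only [hcdef]; linarith)
    set J : ℕ := ⌈Cc⌉₊ + 1 with hJdef
    have hJ : Cc < (J : ℝ) := by
      calc Cc ≤ (⌈Cc⌉₊ : ℝ) := Nat.le_ceil Cc
        _ < (J : ℝ) := by rw [hJdef]; push_cast; linarith
    -- pointwise bound
    have hptwise : ∀ t : ℝ, 0 ≤ t →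
        (∑ m ∈ Finset.range J, Real.exp (-t) * t ^ (k * (m + 1)) / (Nat.factorial (k * (m + 1)) : ℝ))
          ≤ ∑ i, Real.exp (c i * t) := by
      intro t ht
      have hG : (∑ m ∈ Finset.range J, t ^ (k * (m + 1)) / (Nat.factorial (k * (m + 1)) : ℝ))
          ≤ (∑ i, Complex.exp ((t : ℂ) * (e i + 1))).re := by
        have hs := hHS t
        have h1 : ∑ m ∈ (Finset.range J).image (fun m => k * (m + 1)),
            (t ^ m / (Nat.factorial m : ℝ) * ((A ^ m).trace))
            ≤ (∑ i, Complex.exp ((t : ℂ) * (e i + 1))).re := by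
          refine sum_le_hasSum _ (fun m _ => ?_) hs
          exact mul_nonneg (div_nonneg (pow_nonneg ht m) (by positivity)) (htrnn m)
        have hinj : ∀ x ∈ Finset.range J, ∀ y ∈ Finset.range J,
            k * (x + 1) = k * (y + 1) → x = y := by
          intro x _ y _ hxy
          have := Nat.eq_of_mul_eq_mul_left (by omega : 0 < k) hxy
          omega
        rw [Finset.sum_image hinj] at h1
        refine le_trans (Finset.sum_le_sum ?_) h1
        intro m hm
        have h2 : 1 ≤ (A ^ (k * (m + 1))).trace := htrk (m + 1) (by omega)
        have h3 : 0 ≤ t ^ (k * (m + 1)) / (Nat.factorial (k * (m + 1)) : ℝ) := by positivity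
        nlinarith
      have hup : (∑ i, Complex.exp ((t : ℂ) * (e i + 1))).re
          ≤ ∑ i, Real.exp (t * (c i + 1)) := by
        rw [Complex.re_sum]
        refine Finset.sum_le_sum fun i _ => ?_
        calc (Complex.exp ((t : ℂ) * (e i + 1))).re
            ≤ ‖Complex.exp ((t : ℂ) * (e i + 1))‖ := Complex.re_le_norm _
          _ = Real.exp (((t : ℂ) * (e i + 1)).re) := Complex.norm_exp _
          _ = Real.exp (t * (c i + 1)) := by
              congr 1
              rw [Complex.re_ofReal_mul, Complex.add_re, Complex.one_re]
      calc ∑ m ∈ Finset.range J, Real.exp (-t) * t ^ (k * (m + 1)) / (Nat.factorial (k * (m + 1)) : ℝ)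
          = Real.exp (-t) * ∑ m ∈ Finset.range J,
              t ^ (k * (m + 1)) / (Nat.factorial (k * (m + 1)) : ℝ) := by
            rw [Finset.mul_sum]
            exact Finset.sum_congr rfl fun m _ => by ring
        _ ≤ Real.exp (-t) * ∑ i, Real.exp (t * (c i + 1)) :=
            mul_le_mul_of_nonneg_left (hG.trans hup) (Real.exp_pos _).le
        _ = ∑ i, Real.exp (c i * t) := by
            rw [Finset.mul_sum]
            refine Finset.sum_congr rfl fun i _ => ?_
            rw [← Real.exp_add]
            ring_nf
    -- integral comparison
    have hcont1 : Continuous (fun t : ℝ => ∑ m ∈ Finset.range J,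
        Real.exp (-t) * t ^ (k * (m + 1)) / (Nat.factorial (k * (m + 1)) : ℝ)) := by
      apply continuous_finset_sum
      intro m _
      fun_prop
    have hcont2 : Continuous (fun t : ℝ => ∑ i, Real.exp (c i * t)) := by
      apply continuous_finset_sum
      intro i _
      fun_prop
    have hupperT : ∀ T : ℝ, 0 ≤ T →
        (∫ t in (0:ℝ)..T, ∑ m ∈ Finset.range J,
          Real.exp (-t) * t ^ (k * (m + 1)) / (Nat.factorial (k * (m + 1)) : ℝ)) ≤ Cc := by
      intro T hT
      have hmono := intervalIntegral.integral_mono_on (μ := MeasureTheory.volume) hT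
        (hcont1.intervalIntegrable 0 T) (hcont2.intervalIntegrable 0 T)
        (fun x hx => hptwise x hx.1)
      refine hmono.trans ?_
      rw [intervalIntegral.integral_finset_sum (fun i _ =>
        ((by fun_prop : Continuous fun t : ℝ => Real.exp (c i * t)).intervalIntegrable
          (μ := MeasureTheory.volume) 0 T))]
      exact Finset.sum_le_sum fun i _ => aux_exp_integral (hre i) T
    have heachT : ∀ T : ℝ, (∫ t in (0:ℝ)..T, ∑ m ∈ Finset.range J,
          Real.exp (-t) * t ^ (k * (m + 1)) / (Nat.factorial (k * (m + 1)) : ℝ))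
        = ∑ m ∈ Finset.range J,
            (∫ t in (0:ℝ)..T, Real.exp (-t) * t ^ (k * (m + 1))) / (Nat.factorial (k * (m + 1)) : ℝ) := by
      intro T
      rw [intervalIntegral.integral_finset_sum (fun m _ =>
        ((by fun_prop : Continuous fun t : ℝ =>
          Real.exp (-t) * t ^ (k * (m + 1)) / (Nat.factorial (k * (m + 1)) : ℝ)).intervalIntegrable
          (μ := MeasureTheory.volume) 0 T))]
      exact Finset.sum_congr rfl fun m _ => by rw [intervalIntegral.integral_div]
    have hLHS : Filter.Tendsto (fun T : ℝ => ∫ t in (0:ℝ)..T, ∑ m ∈ Finset.range J,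
          Real.exp (-t) * t ^ (k * (m + 1)) / (Nat.factorial (k * (m + 1)) : ℝ))
        Filter.atTop (nhds (J : ℝ)) := by
      have h4 : Filter.Tendsto (fun T : ℝ => ∑ m ∈ Finset.range J,
          (∫ t in (0:ℝ)..T, Real.exp (-t) * t ^ (k * (m + 1))) / (Nat.factorial (k * (m + 1)) : ℝ))
          Filter.atTop (nhds (∑ _m ∈ Finset.range J, (1 : ℝ))) := by
        apply tendsto_finset_sum
        intro m _
        have h5 := (aux_gamma_tendsto (k * (m + 1))).div_const (Nat.factorial (k * (m + 1)) : ℝ)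
        have h6 : ((Nat.factorial (k * (m + 1)) : ℝ)) / (Nat.factorial (k * (m + 1)) : ℝ) = 1 :=
          div_self (by positivity)
        rwa [h6] at h5
      have h7 : (∑ _m ∈ Finset.range J, (1 : ℝ)) = (J : ℝ) := by simp
      rw [h7] at h4
      exact h4.congr (fun T => (heachT T).symm)
    have hev : ∀ᶠ T : ℝ in Filter.atTop, Cc < ∫ t in (0:ℝ)..T, ∑ m ∈ Finset.range J,
        Real.exp (-t) * t ^ (k * (m + 1)) / (Nat.factorial (k * (m + 1)) : ℝ) :=
      hLHS.eventually (eventually_gt_nhds hJ)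
    obtain ⟨T, hT1, hT2⟩ := (hev.and (Filter.eventually_ge_atTop 0)).exists
    exact absurd (hupperT T hT2) (not_le.mpr hT1)
  refine ⟨main, ?_⟩
  obtain ⟨μ, hμs, hμre⟩ := main
  intro hHur
  exact absurd (hHur μ hμs) (not_lt.mpr hμre)
end

section
/- Let A be an n×n Metzler sign-pattern, identified with its unit sign-matrix U = sgn(A) ∈ {−1,0,1}^{n×n} with nonnegative off-diagonal entries. Then every real matrix M whose entries have the same signs as U (M_{ij} > 0 where U_{ij} = 1, M_{ij} < 0 where U_{ij} = −1, M_{ij} = 0 where U_{ij} = 0) is Hurwitz stable if and only if the single matrix U itself is Hurwitz stable. -/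
open Matrix

/-- `M` belongs to the qualitative class of the sign pattern `U`:
its entries have exactly the signs prescribed by `U`. -/
def InQualClass {n : ℕ} (U M : Matrix (Fin n) (Fin n) ℝ) : Prop :=
  ∀ i j, (U i j = 1 → 0 < M i j) ∧ (U i j = -1 → M i j < 0) ∧ (U i j = 0 → M i j = 0)

open Filter

section Analytic


attribute [local instance] Matrix.linftyOpNormedAddCommGroup Matrix.linftyOpNormedRing
  Matrix.linftyOpNormedAlgebra

/-- A Hurwitz-stable matrix with nonnegative off-diagonal entries and diagonal entries `≥ -1`
admits no semipositive vector `v ≥ 0`, `v ≠ 0` with `U *ᵥ v ≥ 0`. -/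
lemma no_semipositive_vector {n : ℕ} (U : Matrix (Fin n) (Fin n) ℝ)
    (hU : IsHurwitz U) (hod : ∀ i j, i ≠ j → 0 ≤ U i j) (hd : ∀ i, -1 ≤ U i i)
    (v : Fin n → ℝ) (hv0 : ∀ i, 0 ≤ v i) (hvne : v ≠ 0)
    (hUv : ∀ i, 0 ≤ U.mulVec v i) : False := by
  classical
  -- a strictly positive coordinate
  obtain ⟨i₀, hi₀⟩ : ∃ i, 0 < v i := by
    obtain ⟨i, hi⟩ := Function.ne_iff.mp hvne
    exact ⟨i, lt_of_le_of_ne (hv0 i) (Ne.symm hi)⟩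
  haveI : Nonempty (Fin n) := ⟨i₀⟩
  set Uc : Matrix (Fin n) (Fin n) ℂ := U.map (Complex.ofReal) with hUc
  have hcpt : IsCompact (spectrum ℂ Uc) := spectrum.isCompact Uc
  have hne : (spectrum ℂ Uc).Nonempty := spectrum.nonempty Uc
  -- maximal real part β < 0
  obtain ⟨lb, hlbmem, hlb⟩ := hcpt.exists_isMaxOn hne Complex.continuous_re.continuousOn
  set β : ℝ := lb.re with hβ
  have hβneg : β < 0 := hU lb hlbmem
  set R : ℝ := ‖Uc‖ with hR
  have hRmem : ∀ μ ∈ spectrum ℂ Uc, ‖μ‖ ≤ R := fun μ hμ => spectrum.norm_le_norm_of_mem hμ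
  -- choose the shift s
  set s : ℝ := max 1 (R ^ 2 / (-(2 * β)) + 1) with hs
  have hs1 : 1 ≤ s := le_max_left _ _
  have hspos : 0 < s := lt_of_lt_of_le one_pos hs1
  have h2β : 0 < -(2 * β) := by linarith
  have hsR : R ^ 2 + 2 * s * β < 0 := by
    have h1 : R ^ 2 / (-(2 * β)) + 1 ≤ s := le_max_right _ _
    have h2 : R ^ 2 / (-(2 * β)) < s := by linarith
    have := (div_lt_iff₀ h2β).mp h2
    nlinarith
  -- all eigenvalues of U shifted by s lie strictly inside the disk of radius s
  have hkey : ∀ μ ∈ spectrum ℂ Uc, ‖μ + (s : ℂ)‖ < s := by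
    intro μ hμ
    have h1 : ‖μ‖ ≤ R := hRmem μ hμ
    have h2 : μ.re ≤ β := hlb hμ
    have hsq : ‖μ + (s : ℂ)‖ ^ 2 = ‖μ‖ ^ 2 + 2 * s * μ.re + s ^ 2 := by
      rw [Complex.sq_norm, Complex.sq_norm]
      simp only [Complex.normSq_apply, Complex.add_re, Complex.add_im, Complex.ofReal_re,
        Complex.ofReal_im]
      ring
    nlinarith [norm_nonneg (μ + (s : ℂ)), norm_nonneg μ]
  -- attained maximum of ‖·+s‖ on the spectrum
  obtain ⟨lm, hlmmem, hlm⟩ := hcpt.exists_isMaxOn hne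
    (Continuous.continuousOn (by fun_prop : Continuous fun z : ℂ => ‖z + (s : ℂ)‖))
  set ρ : ℝ := ‖lm + (s : ℂ)‖ with hρ
  have hρlt : ρ < s := hkey lm hlmmem
  have hρ0 : 0 ≤ ρ := norm_nonneg _
  -- the shifted matrix B
  set B : Matrix (Fin n) (Fin n) ℝ := U + s • 1 with hB
  set Bc : Matrix (Fin n) (Fin n) ℂ := B.map (Complex.ofReal) with hBc
  have hBcU : Bc = Uc + algebraMap ℂ (Matrix (Fin n) (Fin n) ℂ) (s : ℂ) := by
    ext i j
    simp [hBc, hB, hUc, Matrix.map_apply, Matrix.algebraMap_matrix_apply, Matrix.one_apply,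
      Matrix.add_apply, Matrix.smul_apply]
    split <;> simp
  -- spectrum of B is the translate of that of U
  have hspecB : ∀ μ ∈ spectrum ℂ Bc, ‖μ‖ ≤ ρ := by
    intro μ hμ
    have : μ - (s : ℂ) ∈ spectrum ℂ Uc := by
      rw [spectrum.mem_iff] at hμ ⊢
      intro hcon
      apply hμ
      convert hcon using 1
      rw [hBcU, map_sub]
      abel
    have := hlm this
    calc ‖μ‖ = ‖(μ - (s : ℂ)) + (s : ℂ)‖ := by ring_nf
    _ ≤ ρ := this
  have hsrad : spectralRadius ℂ Bc ≤ ENNReal.ofReal ρ := by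
    rw [spectralRadius]
    refine iSup₂_le fun μ hμ => ?_
    rw [← ENNReal.ofReal_coe_nnreal, coe_nnnorm]
    exact ENNReal.ofReal_le_ofReal (hspecB μ hμ)
  -- Gelfand's formula: contradiction with growth of powers
  set s' : ℝ := (ρ + s) / 2 with hs'
  have hρs' : ρ < s' := by rw [hs']; linarith
  have hs's : s' < s := by rw [hs']; linarith
  have hs'pos : 0 < s' := by rw [hs']; linarith
  have hlt : spectralRadius ℂ Bc < ENNReal.ofReal s' :=
    lt_of_le_of_lt hsrad ((ENNReal.ofReal_lt_ofReal_iff hs'pos).mpr hρs')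
  have hev : ∀ᶠ k : ℕ in atTop, (‖Bc ^ k‖₊ : ENNReal) ^ (1 / (k : ℝ)) < ENNReal.ofReal s' :=
    (spectrum.pow_nnnorm_pow_one_div_tendsto_nhds_spectralRadius Bc).eventually_lt_const hlt
  have hupper : ∀ᶠ k : ℕ in atTop, ‖Bc ^ k‖ ≤ s' ^ k := by
    filter_upwards [hev, eventually_ge_atTop 1] with k hk hk1
    have hk0 : (k : ℝ) ≠ 0 := Nat.cast_ne_zero.mpr (by omega)
    have h1 : ((‖Bc ^ k‖₊ : ENNReal) ^ (1 / (k : ℝ))) ^ (k : ℝ) ≤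
        (ENNReal.ofReal s') ^ (k : ℝ) := ENNReal.rpow_le_rpow hk.le (by positivity)
    rw [← ENNReal.rpow_mul, one_div_mul_cancel hk0, ENNReal.rpow_one] at h1
    rw [ENNReal.ofReal_rpow_of_pos hs'pos, ← ENNReal.ofReal_coe_nnreal, coe_nnnorm] at h1
    have h2 := (ENNReal.ofReal_le_ofReal_iff (by positivity)).mp h1
    rwa [Real.rpow_natCast] at h2
  -- entrywise positivity of B and growth of B^k against v
  have hBnn : ∀ i j, 0 ≤ B i j := by
    intro i j
    by_cases h : i = j
    · subst h
      have := hd i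
      simp only [hB, Matrix.add_apply, Matrix.smul_apply, Matrix.one_apply_eq, smul_eq_mul,
        mul_one]
      linarith
    · simp only [hB, Matrix.add_apply, Matrix.smul_apply, Matrix.one_apply_ne h, smul_eq_mul,
        mul_zero, add_zero]
      exact hod i j h
  have hBv : ∀ i, s * v i ≤ B.mulVec v i := by
    intro i
    have hmv : B.mulVec v i = U.mulVec v i + s * v i := by
      rw [hB, Matrix.add_mulVec]
      simp [Matrix.smul_mulVec, Matrix.one_mulVec]
    rw [hmv]
    have := hUv i
    linarith
  have hpow : ∀ k : ℕ, ∀ i, s ^ k * v i ≤ (B ^ k).mulVec v i := by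
    intro k
    induction k with
    | zero => intro i; simp
    | succ k ih =>
      intro i
      have h1 : (B ^ (k + 1)).mulVec v = B.mulVec ((B ^ k).mulVec v) := by
        rw [pow_succ', Matrix.mulVec_mulVec]
      rw [h1]
      have h3 : B.mulVec (fun j => s ^ k * v j) i ≤ B.mulVec ((B ^ k).mulVec v) i := by
        simp only [Matrix.mulVec, dotProduct]
        exact Finset.sum_le_sum fun j _ => mul_le_mul_of_nonneg_left (ih j) (hBnn i j)
      have h4 : B.mulVec (fun j => s ^ k * v j) i = s ^ k * B.mulVec v i := by
        simp only [Matrix.mulVec, dotProduct, Finset.mul_sum]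
        exact Finset.sum_congr rfl fun j _ => by ring
      have h5 : s ^ k * (s * v i) ≤ s ^ k * B.mulVec v i :=
        mul_le_mul_of_nonneg_left (hBv i) (by positivity)
      calc s ^ (k + 1) * v i = s ^ k * (s * v i) := by ring
      _ ≤ s ^ k * B.mulVec v i := h5
      _ = B.mulVec (fun j => s ^ k * v j) i := h4.symm
      _ ≤ _ := h3
  -- transfer to ℂ and bound the norms from below
  set vc : Fin n → ℂ := fun j => (v j : ℂ) with hvc
  have hvinorm : ‖vc i₀‖ = v i₀ := by
    simp [hvc, Complex.norm_real, abs_of_nonneg (hv0 i₀)]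
  have hvcnorm : 0 < ‖vc‖ := by
    have h1 : ‖vc i₀‖ ≤ ‖vc‖ := norm_le_pi_norm vc i₀
    rw [hvinorm] at h1
    linarith
  have hmul : ∀ k : ℕ, s ^ k * v i₀ ≤ ‖Bc ^ k‖ * ‖vc‖ := by
    intro k
    have hmap : (Bc ^ k) = (B ^ k).map Complex.ofReal := by
      have h := map_pow (Complex.ofRealHom.mapMatrix (m := Fin n)) B k
      simp only [RingHom.mapMatrix_apply] at h
      rw [hBc]
      exact h.symm
    have hcomp : ((Bc ^ k).mulVec vc) i₀ = (((B ^ k).mulVec v i₀ : ℝ) : ℂ) := by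
      rw [hmap]
      simp only [Matrix.mulVec, dotProduct, Matrix.map_apply, hvc]
      push_cast
      rfl
    have h1 : s ^ k * v i₀ ≤ ‖((Bc ^ k).mulVec vc) i₀‖ := by
      rw [hcomp, Complex.norm_real]
      calc s ^ k * v i₀ ≤ (B ^ k).mulVec v i₀ := hpow k i₀
      _ ≤ |(B ^ k).mulVec v i₀| := le_abs_self _
      _ = ‖(B ^ k).mulVec v i₀‖ := rfl
    calc s ^ k * v i₀ ≤ ‖((Bc ^ k).mulVec vc) i₀‖ := h1
    _ ≤ ‖(Bc ^ k).mulVec vc‖ := norm_le_pi_norm _ i₀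
    _ ≤ ‖Bc ^ k‖ * ‖vc‖ := Matrix.linfty_opNorm_mulVec _ _
  -- put everything together
  obtain ⟨K, hK⟩ := eventually_atTop.mp hupper
  have hr1 : s' / s < 1 := (div_lt_one hspos).mpr hs's
  have hrnn : 0 ≤ s' / s := by positivity
  have hεpos : 0 < v i₀ / ‖vc‖ := by positivity
  obtain ⟨n₀, hn₀⟩ := exists_pow_lt_of_lt_one hεpos hr1
  set k := max n₀ K with hk
  have hlt2 : (s' / s) ^ k < v i₀ / ‖vc‖ :=
    lt_of_le_of_lt (pow_le_pow_of_le_one hrnn hr1.le (le_max_left _ _)) hn₀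
  have hfin : s ^ k * v i₀ ≤ s' ^ k * ‖vc‖ :=
    le_trans (hmul k)
      (mul_le_mul_of_nonneg_right (hK k (le_max_right _ _)) (norm_nonneg vc))
  rw [div_pow] at hlt2
  have hskpos : (0:ℝ) < s ^ k := by positivity
  have hlt3 := (div_lt_div_iff₀ hskpos hvcnorm).mp hlt2
  nlinarith

end Analytic

lemma hurwitz_of_acyclic {n : ℕ} (M : Matrix (Fin n) (Fin n) ℝ)
    (hdiag : ∀ i, M i i < 0)
    (hacyc : ∀ i, ¬ Relation.TransGen (fun a b => a ≠ b ∧ M a b ≠ 0) i i) :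
    IsHurwitz M := by
  classical
  intro μ hμ
  by_contra hre
  push_neg at hre
  set E : Fin n → Fin n → Prop := fun a b => a ≠ b ∧ M a b ≠ 0 with hE
  set r : Fin n → Fin n → Prop := fun a b => Relation.TransGen E b a with hr
  haveI : IsTrans (Fin n) r := ⟨fun _ _ _ h1 h2 => h2.trans h1⟩
  haveI : IsIrrefl (Fin n) r := ⟨fun a h => hacyc a h⟩
  have hwf : WellFounded r := Finite.wellFounded_of_trans_of_irrefl r
  rw [spectrum.mem_iff] at hμ
  apply hμ
  rw [Matrix.isUnit_iff_isUnit_det, isUnit_iff_ne_zero]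
  intro hdet
  obtain ⟨x, hxne, hxe⟩ := (Matrix.exists_mulVec_eq_zero_iff).mpr hdet
  apply hxne
  funext i
  induction i using hwf.induction with
  | _ i IH =>
  show x i = 0
  -- the i-th row of the eigen-equation
  have hrow : (algebraMap ℂ (Matrix (Fin n) (Fin n) ℂ) μ - M.map Complex.ofReal).mulVec x i = 0 :=
    congrFun hxe i
  rw [Matrix.sub_mulVec, Algebra.algebraMap_eq_smul_one, Matrix.smul_mulVec,
    Matrix.one_mulVec] at hrow
  have hsum : (M.map Complex.ofReal).mulVec x i = (M i i : ℂ) * x i := by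
    simp only [Matrix.mulVec, dotProduct, Matrix.map_apply]
    rw [← Finset.add_sum_erase _ _ (Finset.mem_univ i)]
    have hzero : ∀ j ∈ Finset.univ.erase i, (M i j : ℂ) * x j = 0 := by
      intro j hj
      have hji : j ≠ i := Finset.ne_of_mem_erase hj
      by_cases hMij : M i j = 0
      · simp [hMij]
      · have hxj : x j = 0 := IH j (Relation.TransGen.single ⟨hji.symm, hMij⟩)
        simp [hxj]
    rw [Finset.sum_eq_zero hzero, add_zero]
  simp only [Pi.sub_apply, Pi.smul_apply, smul_eq_mul] at hrow
  rw [hsum] at hrow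
  have hfac : (μ - (M i i : ℂ)) * x i = 0 := by linear_combination hrow
  have hne : (μ - (M i i : ℂ)) ≠ 0 := by
    intro hcon
    have : (μ - (M i i : ℂ)).re = 0 := by rw [hcon]; simp
    rw [Complex.sub_re, Complex.ofReal_re] at this
    have := hdiag i
    linarith
  have := mul_eq_zero.mp hfac
  tauto


/-- For a Metzler sign pattern `U` (entries in `{-1,0,1}`, off-diagonal entries
in `{0,1}`), every matrix in the qualitative class of `U` is Hurwitz stable iff
`U` itself is Hurwitz stable. -/
theorem sign_stable_iff_unit_hurwitz {n : ℕ} (U : Matrix (Fin n) (Fin n) ℝ)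
    (hentries : ∀ i j, U i j = -1 ∨ U i j = 0 ∨ U i j = 1)
    (hoffdiag : ∀ i j, i ≠ j → U i j = 0 ∨ U i j = 1) :
    (∀ M, InQualClass U M → IsHurwitz M) ↔ IsHurwitz U := by
  classical
  constructor
  · intro h
    apply h U
    intro i j
    exact ⟨fun h1 => by rw [h1]; norm_num, fun h1 => by rw [h1]; norm_num, fun h1 => h1⟩
  · intro hU M hM
    have hod : ∀ i j, i ≠ j → 0 ≤ U i j := by
      intro i j hij
      rcases hoffdiag i j hij with h | h <;> rw [h] <;> norm_num
    have hd : ∀ i, -1 ≤ U i i := by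
      intro i
      rcases hentries i i with h | h | h <;> rw [h] <;> norm_num
    -- all diagonal entries of `U` are `-1`
    have hdiag : ∀ i, U i i = -1 := by
      intro i
      by_contra hne
      have hUii : 0 ≤ U i i := by
        rcases hentries i i with h | h | h
        · exact absurd h hne
        all_goals norm_num [h]
      set v : Fin n → ℝ := fun j => if j = i then 1 else 0 with hv
      refine no_semipositive_vector U hU hod hd v
        (fun j => by simp only [hv]; split <;> norm_num) ?_ ?_
      · intro hcon
        have h1 : v i = 0 := congrFun hcon i
        simp [hv] at h1
      · intro j
        have hmv : U.mulVec v j = U j i := by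
          simp [hv, Matrix.mulVec, dotProduct, mul_ite]
        rw [hmv]
        by_cases hji : j = i
        · rw [hji]; exact hUii
        · rcases hoffdiag j i hji with h | h <;> rw [h] <;> norm_num
    -- the off-diagonal digraph of `U` is acyclic
    set E : Fin n → Fin n → Prop := fun a b => a ≠ b ∧ U a b = 1 with hE
    have hacyc : ∀ i, ¬ Relation.TransGen E i i := by
      intro i hcyc
      set v : Fin n → ℝ := fun j =>
        if Relation.TransGen E i j ∧ Relation.TransGen E j i then 1 else 0 with hv
      have hv0 : ∀ j, 0 ≤ v j := fun j => by simp only [hv]; split <;> norm_num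
      refine no_semipositive_vector U hU hod hd v hv0 ?_ ?_
      · intro hcon
        have h1 : v i = 0 := congrFun hcon i
        rw [hv] at h1
        simp [hcyc] at h1
      · intro m
        have hterm : ∀ j, j ≠ m → 0 ≤ U m j * v j := fun j hjm =>
          mul_nonneg (hod m j (Ne.symm hjm)) (hv0 j)
        have hsplit : U.mulVec v m = U m m * v m + ∑ j ∈ Finset.univ.erase m, U m j * v j := by
          simp only [Matrix.mulVec, dotProduct]
          rw [← Finset.add_sum_erase _ _ (Finset.mem_univ m)]
        by_cases hm : Relation.TransGen E i m ∧ Relation.TransGen E m i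
        · obtain ⟨k, hEmk, hki⟩ := (Relation.TransGen.head'_iff).mp hm.2
          have hkS : Relation.TransGen E i k ∧ Relation.TransGen E k i := by
            refine ⟨hm.1.tail hEmk, ?_⟩
            rcases Relation.reflTransGen_iff_eq_or_transGen.mp hki with h | h
            · exact h ▸ hcyc
            · exact h
          have hvk : v k = 1 := by rw [hv]; simp [hkS]
          have hvm : v m = 1 := by rw [hv]; simp [hm]
          have hmk : m ≠ k := hEmk.1
          rw [hsplit, hdiag m, hvm]
          have hksum : U m k * v k ≤ ∑ j ∈ Finset.univ.erase m, U m j * v j :=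
            Finset.single_le_sum (fun j hj => hterm j (Finset.ne_of_mem_erase hj))
              (Finset.mem_erase.mpr ⟨Ne.symm hmk, Finset.mem_univ k⟩)
          rw [hvk, hEmk.2] at hksum
          linarith
        · have hvm : v m = 0 := by rw [hv]; simp [hm]
          rw [hsplit, hvm, mul_zero, zero_add]
          exact Finset.sum_nonneg fun j hj => hterm j (Finset.ne_of_mem_erase hj)
    -- conclude: `M` has negative diagonal and acyclic off-diagonal digraph
    apply hurwitz_of_acyclic
    · intro i
      exact (hM i i).2.1 (hdiag i)
    · intro i hcon
      apply hacyc i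
      refine Relation.TransGen.mono ?_ i i hcon
      intro a b hab
      refine ⟨hab.1, ?_⟩
      rcases hoffdiag a b hab.1 with h | h
      · exact absurd ((hM a b).2.2 h) hab.2
      · exact h
end

section
/- Let U ∈ {−1,0,1}^{n×n} be a Metzler sign-pattern. The sign-pattern is potentially stable (i.e., there exists at least one Hurwitz stable real matrix with this sign pattern) if and only if all diagonal entries of U equal −1. -/
open Matrix

section Aux

attribute [local instance] Matrix.linftyOpNormedRing Matrix.linftyOpNormedAlgebra

private lemma pow_entry_nonneg {n : ℕ} (N : Matrix (Fin n) (Fin n) ℝ)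
    (hN : ∀ a b, 0 ≤ N a b) (m : ℕ) : ∀ a b, 0 ≤ (N ^ m) a b := by
  induction m with
  | zero =>
      intro a b
      rw [pow_zero]
      by_cases h : a = b <;> simp [Matrix.one_apply, h]
  | succ m ih =>
      intro a b
      rw [pow_succ, Matrix.mul_apply]
      exact Finset.sum_nonneg fun j _ => mul_nonneg (ih a j) (hN j b)

private lemma pow_diag_le {n : ℕ} (N : Matrix (Fin n) (Fin n) ℝ)
    (hN : ∀ a b, 0 ≤ N a b) (i : Fin n) (m : ℕ) : (N i i) ^ m ≤ (N ^ m) i i := by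
  induction m with
  | zero => simp [Matrix.one_apply]
  | succ m ih =>
      calc N i i ^ (m + 1) = N i i ^ m * N i i := pow_succ _ _
        _ ≤ (N ^ m) i i * N i i := mul_le_mul_of_nonneg_right ih (hN i i)
        _ ≤ ∑ j, (N ^ m) i j * N j i :=
            Finset.single_le_sum (f := fun j => (N ^ m) i j * N j i)
              (fun j _ => mul_nonneg (pow_entry_nonneg N hN m i j) (hN j i))
              (Finset.mem_univ i)
        _ = (N ^ (m + 1)) i i := by rw [pow_succ, Matrix.mul_apply]

private lemma entry_nnnorm_le {n : ℕ} (A : Matrix (Fin n) (Fin n) ℂ) (i j : Fin n) :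
    ‖A i j‖₊ ≤ ‖A‖₊ := by
  rw [Matrix.linfty_opNNNorm_def]
  refine le_trans
    (Finset.single_le_sum (f := fun j => ‖A i j‖₊) (fun _ _ => zero_le) (Finset.mem_univ j)) ?_
  exact Finset.le_sup (f := fun i => ∑ j, ‖A i j‖₊) (Finset.mem_univ i)

/-- A Metzler matrix which is Hurwitz has negative diagonal. -/
private lemma diag_neg_of_metzler_hurwitz {n : ℕ} (M : Matrix (Fin n) (Fin n) ℝ)
    (hmet : ∀ a b, a ≠ b → 0 ≤ M a b) (hH : IsHurwitz M) (i : Fin n) : M i i < 0 := by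
  by_contra hge
  push_neg at hge
  haveI : Nonempty (Fin n) := ⟨i⟩
  set B : Matrix (Fin n) (Fin n) ℂ := M.map (Complex.ofReal) with hBdef
  have hfin := Matrix.finite_spectrum B
  set t : Finset ℂ := hfin.toFinset with htdef
  set g : ℂ → ℝ := fun z => -z.re / Complex.normSq z with hgdef
  set S : ℝ := ∑ j, |M j j| with hSdef
  have hS : 0 ≤ S := Finset.sum_nonneg fun _ _ => abs_nonneg _
  set cd : ℝ := 1 / (1 + S) with hcddef
  have hcd : 0 < cd := by positivity
  set c : ℝ := min cd (if h : t.Nonempty then t.inf' h g else 1) with hcdef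
  have hre : ∀ μ ∈ spectrum ℂ B, μ.re < 0 := hH
  have hnz : ∀ μ ∈ spectrum ℂ B, Complex.normSq μ ≠ 0 := by
    intro μ hμ
    have := hre μ hμ
    intro h0
    rw [Complex.normSq_eq_zero] at h0
    simp [h0] at this
  have hgpos : ∀ μ ∈ t, 0 < g μ := by
    intro μ hμ
    have hμs : μ ∈ spectrum ℂ B := (Set.Finite.mem_toFinset hfin).mp hμ
    have h1 := hre μ hμs
    have h2 : 0 < Complex.normSq μ := lt_of_le_of_ne (Complex.normSq_nonneg μ)
      (Ne.symm (hnz μ hμs))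
    exact div_pos (by linarith) h2
  have hc : 0 < c := by
    refine lt_min hcd ?_
    split_ifs with h
    · exact (Finset.lt_inf'_iff h).mpr hgpos
    · exact one_pos
  have hccd : c ≤ cd := min_le_left _ _
  have hcg : ∀ μ ∈ spectrum ℂ B, c ≤ g μ := by
    intro μ hμ
    have hμt : μ ∈ t := (Set.Finite.mem_toFinset hfin).mpr hμ
    calc c ≤ _ := min_le_right _ _
      _ = t.inf' ⟨μ, hμt⟩ g := dif_pos _
      _ ≤ g μ := Finset.inf'_le g hμt
  set N : Matrix (Fin n) (Fin n) ℝ := c • M + 1 with hNdef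
  have hNentry : ∀ a b, N a b = c * M a b + (if a = b then (1:ℝ) else 0) := by
    intro a b
    simp [hNdef, Matrix.add_apply, Matrix.smul_apply, Matrix.one_apply, smul_eq_mul]
  have hNpos : ∀ a b, 0 ≤ N a b := by
    intro a b
    rw [hNentry]
    by_cases h : a = b
    · subst h
      rw [if_pos rfl]
      have h1 : |M a a| ≤ S := Finset.single_le_sum (f := fun j => |M j j|)
        (fun j _ => abs_nonneg _) (Finset.mem_univ a)
      have h2 : c * |M a a| ≤ cd * S := by
        apply mul_le_mul hccd h1 (abs_nonneg _) hcd.le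
      have h3 : cd * S < 1 := by
        rw [hcddef]
        rw [div_mul_eq_mul_div, div_lt_one (by linarith)]
        linarith
      have h4 : -(c * M a a) ≤ c * |M a a| := by
        rw [← mul_neg]
        exact mul_le_mul_of_nonneg_left (neg_le_abs _) hc.le
      linarith
    · rw [if_neg h]
      simpa using mul_nonneg hc.le (hmet a b h)
  have hNi : 1 ≤ N i i := by
    rw [hNentry, if_pos rfl]
    nlinarith
  set A' : Matrix (Fin n) (Fin n) ℂ := N.map (Complex.ofReal) with hA'def
  set p : Polynomial ℂ := Polynomial.C (c : ℂ) * Polynomial.X + Polynomial.C 1 with hpdef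
  have haeval : Polynomial.aeval B p = (c : ℂ) • B + 1 := by
    simp [hpdef, Algebra.smul_def]
  have hmap : A' = Polynomial.aeval B p := by
    rw [haeval]
    ext a b
    rw [hA'def, Matrix.map_apply, hNentry]
    simp [Matrix.add_apply, Matrix.smul_apply, Matrix.one_apply, hBdef, Matrix.map_apply,
      apply_ite (Complex.ofReal), smul_eq_mul]
  have hdeg : 0 < p.degree := by
    have : (c : ℂ) ≠ 0 := by
      exact_mod_cast hc.ne'
    rw [hpdef, Polynomial.degree_linear this]
    norm_num
  have hspec : spectrum ℂ A' = (fun k => Polynomial.eval k p) '' spectrum ℂ B := by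
    rw [hmap]
    exact spectrum.map_polynomial_aeval_of_degree_pos B p hdeg
  have hnonempty : (spectrum ℂ B).Nonempty := spectrum.nonempty B
  have hA'nonempty : (spectrum ℂ A').Nonempty := by
    rw [hspec]; exact hnonempty.image _
  have hlt : ∀ μ ∈ spectrum ℂ A', ‖μ‖₊ < 1 := by
    rw [hspec]
    rintro _ ⟨z, hz, rfl⟩
    have hzre := hre z hz
    have hns : 0 < Complex.normSq z := lt_of_le_of_ne (Complex.normSq_nonneg z)
      (Ne.symm (hnz z hz))
    have hcle : c ≤ g z := hcg z hz
    have heval : Polynomial.eval z p = (c : ℂ) * z + 1 := by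
      simp [hpdef]
    have hgz : c * Complex.normSq z ≤ -z.re := by
      rw [hgdef] at hcle
      have := (le_div_iff₀ hns).mp hcle
      linarith
    have hnsq : Complex.normSq z = z.re ^ 2 + z.im ^ 2 := by
      rw [Complex.normSq_apply]; ring
    have hsq : ‖(c : ℂ) * z + 1‖ ^ 2 = (c * z.re + 1) ^ 2 + (c * z.im) ^ 2 := by
      rw [Complex.sq_norm, Complex.normSq_apply]
      simp [Complex.add_re, Complex.add_im, Complex.mul_re, Complex.mul_im]
      ring
    have hnn : (0:ℝ) ≤ ‖(c : ℂ) * z + 1‖ := norm_nonneg _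
    have e3 : ‖(c : ℂ) * z + 1‖ ^ 2 ≤ 1 + c * z.re := by
      rw [hsq]
      nlinarith [mul_le_mul_of_nonneg_left hgz hc.le]
    have e4 : ‖(c : ℂ) * z + 1‖ ^ 2 < 1 := by
      have : c * z.re < 0 := mul_neg_of_pos_of_neg hc hzre
      linarith
    have hkey : ‖(c : ℂ) * z + 1‖ < 1 := by nlinarith
    simp only [heval]
    exact_mod_cast hkey
  have hrad : spectralRadius ℂ A' < 1 := by
    have := spectrum.spectralRadius_lt_of_forall_lt_of_nonempty hA'nonempty
      (r := 1) (fun k hk => hlt k hk)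
    simpa using this
  have hgel := spectrum.pow_nnnorm_pow_one_div_tendsto_nhds_spectralRadius A'
  have hev : ∀ᶠ m : ℕ in Filter.atTop,
      (‖A' ^ m‖₊ : ENNReal) ^ (1 / (m:ℝ)) < 1 := hgel.eventually_lt_const hrad
  obtain ⟨m, hm, hm1⟩ := (hev.and (Filter.eventually_ge_atTop 1)).exists
  have hmpos : (0:ℝ) < 1 / (m:ℝ) := by
    have : (1:ℝ) ≤ m := by exact_mod_cast hm1
    positivity
  have hlt1 : (‖A' ^ m‖₊ : ENNReal) < 1 := by
    by_contra h
    push_neg at h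
    have : (1 : ENNReal) ≤ (‖A' ^ m‖₊ : ENNReal) ^ (1 / (m:ℝ)) := by
      calc (1 : ENNReal) = 1 ^ (1 / (m:ℝ)) := (ENNReal.one_rpow _).symm
        _ ≤ (‖A' ^ m‖₊ : ENNReal) ^ (1 / (m:ℝ)) := ENNReal.rpow_le_rpow h hmpos.le
    exact absurd hm (not_lt.mpr this)
  have hnorm : ‖A' ^ m‖ < 1 := by
    have h2 : ‖A' ^ m‖₊ < 1 := by exact_mod_cast hlt1
    exact_mod_cast h2
  have hmappow : A' ^ m = (N ^ m).map (Complex.ofReal) := by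
    have h1 : A' = Complex.ofRealHom.mapMatrix N := by
      rw [hA'def]; rfl
    rw [h1, ← map_pow]
    rfl
  have h1 : (1:ℝ) ≤ (N ^ m) i i := by
    calc (1:ℝ) = 1 ^ m := (one_pow m).symm
      _ ≤ (N i i) ^ m := pow_le_pow_left₀ zero_le_one hNi m
      _ ≤ (N ^ m) i i := pow_diag_le N hNpos i m
  have h2 : ((N ^ m) i i : ℝ) ≤ ‖(A' ^ m) i i‖ := by
    rw [hmappow, Matrix.map_apply, Complex.norm_real]
    exact le_abs_self _
  have h3 : ‖(A' ^ m) i i‖ ≤ ‖A' ^ m‖ := by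
    have := entry_nnnorm_le (A' ^ m) i i
    exact_mod_cast this
  linarith

end Aux

/-- A Metzler sign pattern is potentially stable (its qualitative class contains
some Hurwitz stable matrix) iff all of its diagonal entries equal `-1`. -/
theorem potentially_stable_iff_diag_neg {n : ℕ} (U : Matrix (Fin n) (Fin n) ℝ)
    (hentries : ∀ i j, U i j = -1 ∨ U i j = 0 ∨ U i j = 1)
    (hoffdiag : ∀ i j, i ≠ j → U i j = 0 ∨ U i j = 1) :
    (∃ M, InQualClass U M ∧ IsHurwitz M) ↔ (∀ i, U i i = -1) := by
  constructor
  · rintro ⟨M, hQ, hH⟩ i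
    have hmet : ∀ a b, a ≠ b → 0 ≤ M a b := by
      intro a b hab
      rcases hoffdiag a b hab with h | h
      · exact le_of_eq ((hQ a b).2.2 h).symm
      · exact le_of_lt ((hQ a b).1 h)
    have hdiag := diag_neg_of_metzler_hurwitz M hmet hH i
    rcases hentries i i with h | h | h
    · exact h
    · exact absurd ((hQ i i).2.2 h) (ne_of_lt hdiag)
    · exact absurd ((hQ i i).1 h) (not_lt.mpr hdiag.le)
  · intro hdiag
    set ε : ℝ := 1 / (2 * n + 2) with hεdef
    have hε : 0 < ε := by positivity
    set M : Matrix (Fin n) (Fin n) ℝ :=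
      Matrix.of (fun a b => if a = b then (-1:ℝ) else if U a b = 1 then ε else 0) with hMdef
    have hMentry : ∀ a b, M a b = if a = b then (-1:ℝ) else if U a b = 1 then ε else 0 :=
      fun a b => rfl
    refine ⟨M, ?_, ?_⟩
    · intro a b
      by_cases hab : a = b
      · subst hab
        refine ⟨?_, ?_, ?_⟩
        · intro h; rw [hdiag a] at h; norm_num at h
        · intro _; rw [hMentry, if_pos rfl]; norm_num
        · intro h; rw [hdiag a] at h; norm_num at h
      · refine ⟨?_, ?_, ?_⟩
        · intro h; rw [hMentry, if_neg hab, if_pos h]; exact hε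
        · intro h
          rcases hoffdiag a b hab with h' | h' <;> rw [h'] at h <;> norm_num at h
        · intro h; rw [hMentry, if_neg hab, if_neg (by rw [h]; norm_num)]
    · intro μ hμ
      set B : Matrix (Fin n) (Fin n) ℂ := M.map (Complex.ofReal) with hBdef
      have hμ' : Module.End.HasEigenvalue (Matrix.toLin' B) μ := by
        apply Module.End.hasEigenvalue_iff_mem_spectrum.mpr
        have h1 : μ ∈ spectrum ℂ ((Matrix.toLinAlgEquiv (Pi.basisFun ℂ (Fin n))) B) := by
          rw [AlgEquiv.spectrum_eq]; exact hμ
        exact h1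
      obtain ⟨k, hk⟩ := eigenvalue_mem_ball hμ'
      have hBkk : B k k = -1 := by
        rw [hBdef, Matrix.map_apply, hMentry, if_pos rfl]
        norm_num
      have hrad : (∑ j ∈ Finset.univ.erase k, ‖B k j‖) ≤ (n:ℝ) * ε := by
        calc (∑ j ∈ Finset.univ.erase k, ‖B k j‖) ≤ ∑ _j ∈ Finset.univ.erase k, ε := by
              apply Finset.sum_le_sum
              intro j hj
              have hjk : j ≠ k := (Finset.mem_erase.mp hj).1
              rw [hBdef, Matrix.map_apply, Complex.norm_real, hMentry, if_neg (Ne.symm hjk)]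
              split_ifs with h
              · simp [abs_of_pos hε]
              · simp [hε.le]
          _ ≤ (n:ℝ) * ε := by
              rw [Finset.sum_const, nsmul_eq_mul]
              have : ((Finset.univ.erase k).card : ℝ) ≤ (n:ℝ) := by
                have h3 : (Finset.univ.erase k).card ≤ n := by
                  simpa using Finset.card_erase_le (s := (Finset.univ : Finset (Fin n))) (a := k)
                exact_mod_cast h3
              exact mul_le_mul_of_nonneg_right this hε.le
      have hnε : (n:ℝ) * ε ≤ 1/2 := by
        rw [hεdef]
        rw [mul_one_div, div_le_div_iff₀ (by positivity) (by norm_num)]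
        push_cast
        linarith
      have hdist : dist μ (B k k) ≤ 1/2 := le_trans (Metric.mem_closedBall.mp hk) (le_trans hrad hnε)
      rw [hBkk] at hdist
      have : ‖μ + 1‖ ≤ 1/2 := by
        rw [Complex.dist_eq, sub_neg_eq_add] at hdist
        exact hdist
      have hre : (μ + 1).re ≤ ‖μ + 1‖ := by
        exact Complex.re_le_norm _
      have : μ.re + 1 ≤ 1/2 := by
        rw [Complex.add_re, Complex.one_re] at hre
        linarith
      linarith
end

section
/- Let U ∈ {0,1}^{n×n} be a nonnegative sign pattern. Every matrix in the qualitative class of U has spectral radius less than 1 if and only if all diagonal entries of U are zero and the directed graph with edge (j,i) whenever U_{ij} = 1 is acyclic. -/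
open Matrix
open scoped NNReal ENNReal

def InQualClassNN {n : ℕ} (U M : Matrix (Fin n) (Fin n) ℝ) : Prop :=
  ∀ i j, (U i j = 1 → 0 < M i j) ∧ (U i j = 0 → M i j = 0)

section NNSignAux

attribute [local instance] Matrix.linftyOpNormedRing Matrix.linftyOpNormedAlgebra

instance matrixCompleteSpaceAux {n : ℕ} : CompleteSpace (Matrix (Fin n) (Fin n) ℂ) :=
  (inferInstance : CompleteSpace (Fin n → Fin n → ℂ))

variable {n : ℕ}

lemma pow_nonneg_entries {U : Matrix (Fin n) (Fin n) ℝ} (hU : ∀ i j, 0 ≤ U i j) :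
    ∀ k i j, 0 ≤ (U ^ k) i j := by
  intro k
  induction k with
  | zero =>
    intro i j
    by_cases h : i = j <;> simp [Matrix.one_apply, h]
  | succ k ih =>
    intro i j
    rw [pow_succ, Matrix.mul_apply]
    exact Finset.sum_nonneg fun l _ => mul_nonneg (ih i l) (hU l j)

lemma mul_entry_le {A B : Matrix (Fin n) (Fin n) ℝ} (hA : ∀ i j, 0 ≤ A i j)
    (hB : ∀ i j, 0 ≤ B i j) (i l j : Fin n) :
    A i l * B l j ≤ (A * B) i j := by
  rw [Matrix.mul_apply]
  exact Finset.single_le_sum (f := fun x => A i x * B x j)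
    (fun x _ => mul_nonneg (hA i x) (hB x j)) (Finset.mem_univ l)

lemma transGen_pow_ge {U : Matrix (Fin n) (Fin n) ℝ}
    (hentries : ∀ i j, U i j = 0 ∨ U i j = 1) {j i : Fin n}
    (h : Relation.TransGen (EdgeRel U) j i) :
    ∃ k, 1 ≤ k ∧ 1 ≤ (U ^ k) i j := by
  have hU : ∀ i j, 0 ≤ U i j := fun i j => by rcases hentries i j with h | h <;> simp [h]
  induction h with
  | single h =>
    refine ⟨1, le_rfl, ?_⟩
    rw [pow_one]
    rcases hentries _ _ with h0 | h1
    · exact absurd h0 h.2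
    · rw [h1]
  | tail _ h₂ ih =>
    obtain ⟨k, hk1, hk⟩ := ih
    rename_i b c _
    have hUcb : U c b = 1 := (hentries c b).resolve_left h₂.2
    refine ⟨k + 1, le_add_self, ?_⟩
    have hle := mul_entry_le hU (pow_nonneg_entries hU k) c b j
    rw [← pow_succ'] at hle
    nlinarith [hle, hk, hUcb]

lemma pow_diag_ge {V : Matrix (Fin n) (Fin n) ℝ} (hV : ∀ i j, 0 ≤ V i j) {i : Fin n}
    (h : 1 ≤ V i i) : ∀ m, 1 ≤ (V ^ m) i i := by
  intro m
  induction m with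
  | zero => simp [Matrix.one_apply]
  | succ m ih =>
    have hle := mul_entry_le (pow_nonneg_entries hV m) hV i i i
    rw [← pow_succ] at hle
    nlinarith [hle, ih, h]

lemma spec_contra (U : Matrix (Fin n) (Fin n) ℝ)
    (hspec : ∀ μ ∈ spectrum ℂ (U.map (Complex.ofReal)), ‖μ‖ < 1)
    (i : Fin n) (k : ℕ) (hk : 1 ≤ k) (hdiag : 1 ≤ (U ^ k) i i)
    (hU : ∀ i j, 0 ≤ U i j) : False := by
  haveI : Nonempty (Fin n) := ⟨i⟩
  haveI : Nontrivial (Matrix (Fin n) (Fin n) ℂ) := by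
    refine ⟨0, 1, fun h => ?_⟩
    have := congrFun (congrFun h i) i
    simp [Matrix.one_apply] at this
  set A := U.map (Complex.ofReal) with hAdef
  have hradius : spectralRadius ℂ A < (1 : ℝ≥0) := by
    apply spectrum.spectralRadius_lt_of_forall_lt
    intro z hz
    exact_mod_cast hspec z hz
  have htends := spectrum.pow_nnnorm_pow_one_div_tendsto_nhds_spectralRadius A
  have hev := htends.eventually_lt_const (show spectralRadius ℂ A < 1 by simpa using hradius)
  obtain ⟨N, hN⟩ := Filter.eventually_atTop.mp hev
  set m := k * (N + 1) with hm
  have hm1 : 1 ≤ m := Nat.one_le_iff_ne_zero.mpr (by positivity)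
  have hmN : N ≤ m := le_trans (Nat.le_succ N) (Nat.le_mul_of_pos_left _ hk)
  have hUm : (1 : ℝ) ≤ (U ^ m) i i := by
    rw [hm, pow_mul]
    exact pow_diag_ge (pow_nonneg_entries hU k) hdiag (N + 1)
  have hApow : A ^ m = (U ^ m).map (Complex.ofReal) := by
    have h1 : A = Complex.ofRealHom.mapMatrix U := rfl
    have h2 : (U ^ m).map (Complex.ofReal) = Complex.ofRealHom.mapMatrix (U ^ m) := rfl
    rw [h1, h2, map_pow]
  have hnorm : (1 : ℝ≥0) ≤ ‖A ^ m‖₊ := by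
    have hentry : (1 : ℝ≥0) ≤ ‖(A ^ m) i i‖₊ := by
      rw [hApow, Matrix.map_apply]
      have h1 : (1 : ℝ) ≤ ‖((((U ^ m) i i : ℝ)) : ℂ)‖ := by
        rw [Complex.norm_real, Real.norm_eq_abs]
        exact le_trans hUm (le_abs_self _)
      exact_mod_cast h1
    refine le_trans hentry ?_
    rw [Matrix.linfty_opNNNorm_def]
    exact le_trans
      (Finset.single_le_sum (f := fun j => ‖(A ^ m) i j‖₊) (fun _ _ => zero_le)
        (Finset.mem_univ i))
      (Finset.le_sup (f := fun i => ∑ j : Fin n, ‖(A ^ m) i j‖₊) (Finset.mem_univ i))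
  have hge : (1 : ℝ≥0∞) ≤ (‖A ^ m‖₊ : ℝ≥0∞) ^ (1 / (m : ℝ)) := by
    apply ENNReal.one_le_rpow
    · exact_mod_cast hnorm
    · have : (0 : ℝ) < m := by exact_mod_cast hm1
      positivity
  exact absurd hge (not_le.mpr (hN m hmN))

end NNSignAux

/-- For a nonnegative sign pattern `U ∈ {0,1}^{n×n}`, every matrix in the
qualitative class has spectral radius `< 1` iff all diagonal entries of `U`
are zero and the directed graph of `U` is acyclic. -/
theorem nn_sign_schur_iff_acyclic {n : ℕ} (U : Matrix (Fin n) (Fin n) ℝ)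
    (hentries : ∀ i j, U i j = 0 ∨ U i j = 1) :
    (∀ M, InQualClassNN U M → ∀ μ ∈ spectrum ℂ (M.map (Complex.ofReal)), ‖μ‖ < 1) ↔
    ((∀ i, U i i = 0) ∧ ∀ i : Fin n, ¬ Relation.TransGen (EdgeRel U) i i) := by
  constructor
  · intro h
    have hUQ : InQualClassNN U U := fun i j => ⟨fun h1 => by rw [h1]; exact one_pos, fun h0 => h0⟩
    have hspec := h U hUQ
    have hU0 : ∀ i j, 0 ≤ U i j := fun i j => by rcases hentries i j with h' | h' <;> simp [h']
    constructor
    · intro i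
      by_contra hne
      have h1 : U i i = 1 := (hentries i i).resolve_left hne
      exact spec_contra U hspec i 1 le_rfl (by rw [pow_one, h1]) hU0
    · intro i hcyc
      obtain ⟨k, hk1, hk⟩ := transGen_pow_ge hentries hcyc
      exact spec_contra U hspec i k hk1 hk hU0
  · rintro ⟨hdiag, hacyc⟩ M hM μ hμ
    classical
    have hMd : ∀ i, M i i = 0 := fun i => (hM i i).2 (hdiag i)
    have hedge : ∀ i j, M i j ≠ 0 → EdgeRel U j i := by
      intro i j hij
      refine ⟨?_, fun h0 => hij ((hM i j).2 h0)⟩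
      rintro rfl
      exact hij (hMd i)
    haveI : IsTrans (Fin n) (fun a b => Relation.TransGen (EdgeRel U) b a) :=
      ⟨fun a b c h1 h2 => Relation.TransGen.trans h2 h1⟩
    haveI : IsIrrefl (Fin n) (fun a b => Relation.TransGen (EdgeRel U) b a) :=
      ⟨fun a h => hacyc a h⟩
    have hwf : WellFounded (fun a b : Fin n => EdgeRel U b a) :=
      Subrelation.wf (fun {a b} h => Relation.TransGen.single h)
        (Finite.wellFounded_of_trans_of_irrefl _)
    have hcol : ∀ j : Fin n, ∃ k, ∀ m, k ≤ m → ∀ i, (M ^ m) i j = 0 := by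
      intro j
      induction j using WellFounded.induction hwf with
      | _ j ih =>
        set K : Fin n → ℕ := fun l => if h : EdgeRel U j l then (ih l h).choose else 0 with hK
        refine ⟨(Finset.univ.sup K) + 1, ?_⟩
        intro m hm i
        obtain ⟨m', rfl⟩ : ∃ m', m = m' + 1 := ⟨m - 1, by omega⟩
        have hm' : Finset.univ.sup K ≤ m' := by omega
        rw [pow_succ, Matrix.mul_apply]
        refine Finset.sum_eq_zero fun l _ => ?_
        by_cases hl : M l j = 0
        · rw [hl, mul_zero]
        · have he : EdgeRel U j l := hedge l j hl
          have hKeq : K l = (ih l he).choose := dif_pos he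
          have hKl : (ih l he).choose ≤ m' :=
            hKeq ▸ le_trans (Finset.le_sup (Finset.mem_univ l)) hm'
          rw [(ih l he).choose_spec m' hKl i, zero_mul]
    set Kb := (Finset.univ.sup fun j => (hcol j).choose) + 1 with hKb
    have hMK : M ^ Kb = 0 := by
      ext i j
      rw [Matrix.zero_apply]
      exact (hcol j).choose_spec Kb
        (le_trans (Finset.le_sup (f := fun j => (hcol j).choose) (Finset.mem_univ j))
          (Nat.le_succ _)) i
    have hAK : (M.map (Complex.ofReal)) ^ Kb = 0 := by
      have h1 : M.map (Complex.ofReal) = Complex.ofRealHom.mapMatrix M := rfl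
      rw [h1, ← map_pow, hMK, map_zero]
    rcases Nat.eq_zero_or_pos n with hn | hn
    · subst hn
      haveI : Subsingleton (Matrix (Fin 0) (Fin 0) ℂ) := ⟨fun a b => by ext i j; exact i.elim0⟩
      exact absurd (spectrum.mem_iff.mp hμ) (not_not.mpr (isUnit_of_subsingleton _))
    · have hμ0 : μ = 0 := by
        by_contra hne
        apply spectrum.mem_iff.mp hμ
        have hnil : IsNilpotent (μ⁻¹ • M.map (Complex.ofReal)) :=
          IsNilpotent.smul ⟨Kb, hAK⟩ μ⁻¹
        have hu : IsUnit ((1 : Matrix (Fin n) (Fin n) ℂ) - μ⁻¹ • M.map (Complex.ofReal)) :=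
          hnil.isUnit_one_sub
        have heq : algebraMap ℂ (Matrix (Fin n) (Fin n) ℂ) μ - M.map (Complex.ofReal)
            = μ • ((1 : Matrix (Fin n) (Fin n) ℂ) - μ⁻¹ • M.map (Complex.ofReal)) := by
          rw [smul_sub, smul_smul, mul_inv_cancel₀ hne, one_smul,
            Algebra.algebraMap_eq_smul_one]
        rw [heq, Algebra.smul_def]
        exact ((Ne.isUnit hne).map (algebraMap ℂ (Matrix (Fin n) (Fin n) ℂ))).mul hu
      rw [hμ0]
      simp
end

section
/- Let A₁, …, A_N be n×n Metzler matrices, all with negative diagonal entries. If the sum A₁ + ⋯ + A_N is such that its unit sign matrix sgn(ΣA_i) is Hurwitz stable, then for every nonzero β ∈ {0,1}^N, the matrix sgn(Σᵢ βᵢ Aᵢ) is Hurwitz stable. (Key monotonicity step: sgn(Σᵢ βᵢ Aᵢ) ≤ sgn(Σᵢ Aᵢ) entrywise implies the spectral abscissa of the former is at most that of the latter.) -/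
open Matrix
open scoped ENNReal NNReal

/-- Entrywise sign (unit sign-matrix) of a real matrix. -/
noncomputable def signMatrix {n : ℕ} (M : Matrix (Fin n) (Fin n) ℝ) : Matrix (Fin n) (Fin n) ℝ :=
  fun i j => Real.sign (M i j)

attribute [local instance] Matrix.linftyOpNormedRing Matrix.linftyOpNormedAlgebra

section Aux

variable {n : ℕ}

lemma pow_entry_le {B C : Matrix (Fin n) (Fin n) ℝ} (hB : ∀ i j, 0 ≤ B i j)
    (hBC : ∀ i j, B i j ≤ C i j) (k : ℕ) :
    ∀ i j, 0 ≤ (B ^ k) i j ∧ (B ^ k) i j ≤ (C ^ k) i j := by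
  induction k with
  | zero =>
    intro i j
    simp only [pow_zero, Matrix.one_apply]
    split <;> norm_num
  | succ k ih =>
    intro i j
    rw [pow_succ, pow_succ]
    simp only [Matrix.mul_apply]
    refine ⟨Finset.sum_nonneg fun l _ => mul_nonneg (ih i l).1 (hB l j),
      Finset.sum_le_sum fun l _ => mul_le_mul (ih i l).2 (hBC l j) (hB l j)
        (le_trans (ih i l).1 (ih i l).2)⟩

lemma nnnorm_map_le {B C : Matrix (Fin n) (Fin n) ℝ} (hB : ∀ i j, 0 ≤ B i j)
    (hBC : ∀ i j, B i j ≤ C i j) :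
    ‖B.map (Complex.ofReal)‖₊ ≤ ‖C.map (Complex.ofReal)‖₊ := by
  rw [Matrix.linfty_opNNNorm_def, Matrix.linfty_opNNNorm_def]
  refine Finset.sup_mono_fun fun i _ => Finset.sum_le_sum fun j _ => ?_
  simp only [Matrix.map_apply]
  rw [← norm_toNNReal, ← norm_toNNReal]
  refine Real.toNNReal_le_toNNReal ?_
  rw [Complex.norm_real, Complex.norm_real, Real.norm_eq_abs, Real.norm_eq_abs,
    abs_of_nonneg (hB i j), abs_of_nonneg (le_trans (hB i j) (hBC i j))]
  exact hBC i j

lemma specRad_mono {B C : Matrix (Fin n) (Fin n) ℝ} (hB : ∀ i j, 0 ≤ B i j)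
    (hBC : ∀ i j, B i j ≤ C i j) :
    spectralRadius ℂ (B.map Complex.ofReal) ≤ spectralRadius ℂ (C.map Complex.ofReal) := by
  haveI : CompleteSpace (Matrix (Fin n) (Fin n) ℂ) := FiniteDimensional.complete ℂ _
  have h1 := spectrum.pow_nnnorm_pow_one_div_tendsto_nhds_spectralRadius (B.map Complex.ofReal)
  have h2 := spectrum.pow_nnnorm_pow_one_div_tendsto_nhds_spectralRadius (C.map Complex.ofReal)
  refine le_of_tendsto_of_tendsto' h1 h2 fun k => ?_
  have hBk : (B.map Complex.ofReal) ^ k = (B ^ k).map Complex.ofReal := by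
    exact (map_pow (Complex.ofRealHom.mapMatrix) B k).symm
  have hCk : (C.map Complex.ofReal) ^ k = (C ^ k).map Complex.ofReal := by
    exact (map_pow (Complex.ofRealHom.mapMatrix) C k).symm
  rw [hBk, hCk]
  have := nnnorm_map_le (fun i j => (pow_entry_le hB hBC k i j).1)
    (fun i j => (pow_entry_le hB hBC k i j).2)
  exact ENNReal.rpow_le_rpow (ENNReal.coe_le_coe.mpr this) (by positivity)

end Aux

lemma hurwitz_of_le {n : ℕ} {X Y : Matrix (Fin n) (Fin n) ℝ}
    (hXd : ∀ i, -1 ≤ X i i) (hXo : ∀ i j, i ≠ j → 0 ≤ X i j)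
    (hle : ∀ i j, X i j ≤ Y i j) (hY : IsHurwitz Y) : IsHurwitz X := by
  intro μ hμ
  rcases Nat.eq_zero_or_pos n with hn | hn
  · exfalso
    subst hn
    haveI : Subsingleton (Matrix (Fin 0) (Fin 0) ℂ) :=
      ⟨fun a b => by ext i j; exact i.elim0⟩
    exact spectrum.notMem_iff.mpr (isUnit_of_subsingleton _) hμ
  haveI : Nonempty (Fin n) := ⟨⟨0, hn⟩⟩
  haveI : CompleteSpace (Matrix (Fin n) (Fin n) ℂ) := FiniteDimensional.complete ℂ _
  set M := Y.map Complex.ofReal with hM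
  have hne : (spectrum ℂ M).Nonempty := spectrum.nonempty M
  obtain ⟨z, hz, hzmax⟩ := (spectrum.isCompact M).exists_isMaxOn hne
    (Complex.continuous_re.continuousOn)
  set δ := -z.re with hδdef
  have hδ : 0 < δ := by have := hY z hz; simp only [hδdef]; linarith
  set R := ‖M‖ with hRdef
  have hRmem : ∀ μ' ∈ spectrum ℂ M, ‖μ'‖ ≤ R := fun μ' h => spectrum.norm_le_norm_of_mem h
  have hδR : δ ≤ R := by
    have h1 : δ ≤ ‖z‖ := by
      have h2 := Complex.abs_re_le_norm z
      calc δ = -z.re := rfl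
      _ ≤ |z.re| := neg_le_abs _
      _ ≤ ‖z‖ := h2
    exact h1.trans (hRmem z hz)
  set c := max 1 (R ^ 2 / (2 * δ) + 1) with hcdef
  have hc1 : (1 : ℝ) ≤ c := le_max_left _ _
  have hc0 : (0 : ℝ) < c := lt_of_lt_of_le one_pos hc1
  have hcR : R ^ 2 < 2 * c * δ := by
    have h2 : R ^ 2 / (2 * δ) + 1 ≤ c := le_max_right _ _
    have h3 : R ^ 2 / (2 * δ) < c := by linarith
    have h4 : R ^ 2 = R ^ 2 / (2 * δ) * (2 * δ) := by field_simp
    rw [h4]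
    calc R ^ 2 / (2 * δ) * (2 * δ) < c * (2 * δ) := by nlinarith
    _ = 2 * c * δ := by ring
  set b := c ^ 2 - 2 * c * δ + R ^ 2 with hbdef
  have hb0 : (0 : ℝ) ≤ b := by nlinarith [sq_nonneg (c - δ)]
  have hbc : Real.sqrt b < c := by
    have hlt : b < c ^ 2 := by nlinarith
    calc Real.sqrt b < Real.sqrt (c ^ 2) := Real.sqrt_lt_sqrt hb0 hlt
    _ = c := by rw [Real.sqrt_sq hc0.le]
  have hbound : ∀ ν ∈ spectrum ℂ (algebraMap ℂ (Matrix (Fin n) (Fin n) ℂ) (c : ℂ) + M),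
      ‖ν‖ ≤ Real.sqrt b := by
    intro ν hν
    rw [← spectrum.singleton_add_eq] at hν
    obtain ⟨u, hu, μ', hμ', rfl⟩ := Set.mem_add.mp hν
    rcases Set.mem_singleton_iff.mp hu
    have h1 : μ'.re ≤ -δ := by
      have := hzmax hμ'
      simp only [hδdef, neg_neg]
      simpa using this
    have h2 : ‖μ'‖ ≤ R := hRmem _ hμ'
    have hsq : ‖(c : ℂ) + μ'‖ ^ 2 = (c + μ'.re) ^ 2 + μ'.im ^ 2 := by
      rw [Complex.sq_norm, Complex.normSq_apply]
      simp [Complex.add_re, Complex.add_im]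
      ring
    have hnormsq : μ'.re ^ 2 + μ'.im ^ 2 ≤ R ^ 2 := by
      have h5 : μ'.re ^ 2 + μ'.im ^ 2 = ‖μ'‖ ^ 2 := by
        rw [Complex.sq_norm, Complex.normSq_apply]; ring
      rw [h5]
      exact pow_le_pow_left₀ (norm_nonneg _) h2 2
    have h6 : ‖(c : ℂ) + μ'‖ ^ 2 ≤ b := by rw [hsq]; nlinarith
    have := Real.sqrt_le_sqrt h6
    rwa [Real.sqrt_sq (norm_nonneg _)] at this
  have hsrY : spectralRadius ℂ (algebraMap ℂ (Matrix (Fin n) (Fin n) ℂ) (c : ℂ) + M)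
      ≤ ((Real.sqrt b).toNNReal : ℝ≥0∞) := by
    rw [spectralRadius]
    refine iSup₂_le fun ν hν => ?_
    rw [ENNReal.coe_le_coe, ← norm_toNNReal]
    exact Real.toNNReal_le_toNNReal (hbound ν hν)
  set B := c • (1 : Matrix (Fin n) (Fin n) ℝ) + X with hBdef
  set C2 := c • (1 : Matrix (Fin n) (Fin n) ℝ) + Y with hC2def
  have hmapB : B.map Complex.ofReal
      = algebraMap ℂ (Matrix (Fin n) (Fin n) ℂ) (c : ℂ) + X.map Complex.ofReal := by
    ext i j
    simp only [hBdef, Matrix.map_apply, Matrix.add_apply, Matrix.smul_apply,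
      Matrix.algebraMap_matrix_apply, Matrix.one_apply, smul_eq_mul]
    split_ifs <;> simp [Algebra.algebraMap_self]
  have hmapC : C2.map Complex.ofReal
      = algebraMap ℂ (Matrix (Fin n) (Fin n) ℂ) (c : ℂ) + M := by
    ext i j
    simp only [hC2def, hM, Matrix.map_apply, Matrix.add_apply, Matrix.smul_apply,
      Matrix.algebraMap_matrix_apply, Matrix.one_apply, smul_eq_mul]
    split_ifs <;> simp [Algebra.algebraMap_self]
  have hB0 : ∀ i j, 0 ≤ B i j := by
    intro i j
    by_cases h : i = j
    · subst h
      simp only [hBdef, Matrix.add_apply, Matrix.smul_apply, Matrix.one_apply_eq, smul_eq_mul,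
        mul_one]
      linarith [hXd i]
    · simp only [hBdef, Matrix.add_apply, Matrix.smul_apply, Matrix.one_apply_ne h, smul_eq_mul,
        mul_zero, zero_add]
      exact hXo i j h
  have hBC : ∀ i j, B i j ≤ C2 i j := by
    intro i j
    simp only [hBdef, hC2def, Matrix.add_apply]
    exact add_le_add_right (hle i j) _
  have hchain : spectralRadius ℂ (B.map Complex.ofReal) ≤ ((Real.sqrt b).toNNReal : ℝ≥0∞) :=
    (specRad_mono hB0 hBC).trans (by rw [hmapC]; exact hsrY)
  have hμc : (c : ℂ) + μ ∈ spectrum ℂ (B.map Complex.ofReal) := by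
    rw [hmapB, ← spectrum.singleton_add_eq]
    exact Set.add_mem_add rfl hμ
  have hnn : (‖(c : ℂ) + μ‖₊ : ℝ≥0∞) ≤ spectralRadius ℂ (B.map Complex.ofReal) :=
    le_iSup₂ (f := fun k (_ : k ∈ spectrum ℂ (B.map Complex.ofReal)) => (‖k‖₊ : ℝ≥0∞)) _ hμc
  have hfin : ‖(c : ℂ) + μ‖ ≤ Real.sqrt b := by
    have h7 := hnn.trans hchain
    rw [ENNReal.coe_le_coe] at h7
    have h8 := NNReal.coe_le_coe.mpr h7
    rwa [coe_nnnorm, Real.coe_toNNReal _ (Real.sqrt_nonneg _)] at h8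
  have hre : μ.re + c ≤ ‖(c : ℂ) + μ‖ := by
    have h9 := Complex.re_le_norm ((c : ℂ) + μ)
    simpa [add_comm] using h9
  linarith

lemma neg_one_le_sign (x : ℝ) : -1 ≤ Real.sign x := by
  rcases lt_trichotomy x 0 with h | h | h
  · rw [Real.sign_of_neg h]
  · rw [h, Real.sign_zero]; norm_num
  · rw [Real.sign_of_pos h]; norm_num

lemma sign_nonneg_of_nonneg {x : ℝ} (h : 0 ≤ x) : 0 ≤ Real.sign x := by
  rcases h.lt_or_eq with h | h
  · rw [Real.sign_of_pos h]; norm_num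
  · rw [← h, Real.sign_zero]

lemma sign_mono_of_nonneg {x y : ℝ} (hx : 0 ≤ x) (hxy : x ≤ y) :
    Real.sign x ≤ Real.sign y := by
  rcases hx.lt_or_eq with h | h
  · rw [Real.sign_of_pos h, Real.sign_of_pos (h.trans_le hxy)]
  · rw [← h, Real.sign_zero]; exact sign_nonneg_of_nonneg (h ▸ hxy)

/-- If `A₁,…,A_N` are Metzler with negative diagonal and the unit sign-matrix of
their sum is Hurwitz stable, then for every nonzero `β ∈ {0,1}^N` the unit
sign-matrix of `∑ βᵢ Aᵢ` is Hurwitz stable. -/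
theorem sign_stable_convex_hull {n N : ℕ} (A : Fin N → Matrix (Fin n) (Fin n) ℝ)
    (hMetz : ∀ k, IsMetzler (A k)) (hdiag : ∀ k i, A k i i < 0)
    (hsum : IsHurwitz (signMatrix (∑ k, A k))) :
    ∀ β : Fin N → ℝ, (∀ k, β k = 0 ∨ β k = 1) → β ≠ 0 →
      IsHurwitz (signMatrix (∑ k, β k • A k)) := by
  intro β hβ hβ0
  obtain ⟨k0, hk0⟩ : ∃ k, β k = 1 := by
    by_contra h
    push_neg at h
    apply hβ0
    funext k
    rcases hβ k with h0 | h1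
    · exact h0
    · exact absurd h1 (h k)
  have hβ01 : ∀ k, 0 ≤ β k ∧ β k ≤ 1 := by
    intro k; rcases hβ k with h | h <;> rw [h] <;> norm_num
  have hSentry : ∀ i j, (∑ k, β k • A k) i j = ∑ k, β k * A k i j := by
    intro i j; simp [Matrix.sum_apply, Matrix.smul_apply]
  have hTentry : ∀ i j, (∑ k, A k) i j = ∑ k, A k i j := by
    intro i j; simp [Matrix.sum_apply]
  have hSd : ∀ i, (∑ k, β k • A k) i i < 0 := by
    intro i
    rw [hSentry]
    have h1 : ∑ k, β k * A k i i < ∑ (_ : Fin N), (0 : ℝ) := by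
      refine Finset.sum_lt_sum (fun k _ => ?_) ⟨k0, Finset.mem_univ k0, ?_⟩
      · exact mul_nonpos_of_nonneg_of_nonpos (hβ01 k).1 (hdiag k i).le
      · rw [hk0, one_mul]; exact hdiag k0 i
    simpa using h1
  have hTd : ∀ i, (∑ k, A k) i i < 0 := by
    intro i
    rw [hTentry]
    exact Finset.sum_neg (fun k _ => hdiag k i) ⟨k0, Finset.mem_univ k0⟩
  have hSo : ∀ i j, i ≠ j → 0 ≤ (∑ k, β k • A k) i j := by
    intro i j hij
    rw [hSentry]
    exact Finset.sum_nonneg fun k _ => mul_nonneg (hβ01 k).1 (hMetz k i j hij)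
  refine hurwitz_of_le (fun i => ?_) (fun i j hij => ?_) (fun i j => ?_) hsum
  · exact neg_one_le_sign _
  · exact sign_nonneg_of_nonneg (hSo i j hij)
  · show Real.sign _ ≤ Real.sign _
    by_cases hij : i = j
    · subst hij
      rw [Real.sign_of_neg (hSd i), Real.sign_of_neg (hTd i)]
    · refine sign_mono_of_nonneg (hSo i j hij) ?_
      rw [hSentry, hTentry]
      exact Finset.sum_le_sum fun k _ =>
        mul_le_of_le_one_left (hMetz k i j hij) (hβ01 k).2
end

section
/- Let A₁, …, A_N be n×n real upper-triangular Hurwitz stable matrices. Then there exists a single positive vector v ∈ ℝⁿ_{>0} such that vᵀAᵢ < 0 (componentwise) for all i = 1, …, N. -/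
open Matrix

/-- For finitely many upper-triangular Hurwitz stable real matrices, there is a
single positive vector `v` with `vᵀAᵢ` componentwise negative for all `i`. -/
theorem common_linear_lyapunov {n N : ℕ} (A : Fin N → Matrix (Fin n) (Fin n) ℝ)
    (htri : ∀ k, ∀ i j : Fin n, j < i → A k i j = 0)
    (hH : ∀ k, IsHurwitz (A k)) :
    ∃ v : Fin n → ℝ, (∀ i, 0 < v i) ∧ ∀ k, ∀ j, (v ᵥ* A k) j < 0 := by
  have hdiag : ∀ k, ∀ j : Fin n, A k j j < 0 := by
    intro k j
    have hmem : ((A k j j : ℝ) : ℂ) ∈ spectrum ℂ ((A k).map Complex.ofReal) := by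
      rw [spectrum.mem_iff]
      set M : Matrix (Fin n) (Fin n) ℂ :=
        algebraMap ℂ _ ((A k j j : ℝ) : ℂ) - (A k).map Complex.ofReal with hM
      have htr : M.BlockTriangular id := by
        intro a b hab
        have h0 := htri k a b hab
        have hne : b ≠ a := ne_of_lt hab
        simp [hM, Matrix.sub_apply, Matrix.map_apply, Matrix.algebraMap_matrix_apply,
          Ne.symm hne, h0]
      rw [Matrix.isUnit_iff_isUnit_det, Matrix.det_of_upperTriangular htr]
      have hz : M j j = 0 := by
        simp [hM, Matrix.sub_apply, Matrix.map_apply, Matrix.algebraMap_matrix_apply]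
      have hp : (∏ i : Fin n, M i i) = 0 := Finset.prod_eq_zero (Finset.mem_univ j) hz
      rw [hp]
      exact not_isUnit_zero
    have := hH k _ hmem
    simpa using this
  have main : ∀ m : ℕ, m ≤ n → ∃ v : Fin n → ℝ, (∀ i, 0 < v i) ∧
      ∀ k, ∀ j : Fin n, (j : ℕ) < m → (v ᵥ* A k) j < 0 := by
    intro m
    induction m with
    | zero => exact fun _ => ⟨fun _ => 1, fun _ => one_pos,
        fun k j h => absurd h (Nat.not_lt_zero _)⟩
    | succ m ih =>
      intro hm
      obtain ⟨v, hv, hvlt⟩ := ih (Nat.le_of_succ_le hm)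
      have hmn : m < n := hm
      set jm : Fin n := ⟨m, hmn⟩ with hjm
      set S : Fin N → ℝ := fun k => ∑ i ∈ Finset.univ.erase jm, v i * A k i jm with hS
      set c : ℝ := 1 + ∑ k, max 0 (S k / (-(A k jm jm))) with hc
      have hsum_nonneg : (0:ℝ) ≤ ∑ k, max 0 (S k / (-(A k jm jm))) :=
        Finset.sum_nonneg fun k _ => le_max_left _ _
      have hc1 : (1:ℝ) ≤ c := by simp [hc]; linarith
      have hckey : ∀ k, S k / (-(A k jm jm)) < c := by
        intro k
        have h1 : max 0 (S k / (-(A k jm jm))) ≤ ∑ k, max 0 (S k / (-(A k jm jm))) :=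
          Finset.single_le_sum (f := fun k => max 0 (S k / (-(A k jm jm))))
            (fun k _ => le_max_left 0 _) (Finset.mem_univ k)
        have h2 : S k / (-(A k jm jm)) ≤ max 0 (S k / (-(A k jm jm))) := le_max_right _ _
        linarith
      refine ⟨Function.update v jm c, ?_, ?_⟩
      · intro i
        rcases eq_or_ne i jm with rfl | hne
        · simpa using lt_of_lt_of_le one_pos hc1
        · simpa [Function.update_of_ne hne] using hv i
      · intro k j hj
        rcases lt_or_eq_of_le (Nat.lt_succ_iff.mp hj) with hjlt | hjeq
        · have heq : (Function.update v jm c ᵥ* A k) j = (v ᵥ* A k) j := by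
            simp only [Matrix.vecMul, dotProduct]
            refine Finset.sum_congr rfl fun i _ => ?_
            rcases eq_or_ne i jm with rfl | hne
            · have : j < jm := by
                rw [Fin.lt_def]; exact hjlt
              rw [htri k jm j this]; ring
            · rw [Function.update_of_ne hne]
          rw [heq]; exact hvlt k j hjlt
        · have hjjm : j = jm := by
            apply Fin.ext; exact hjeq
          rw [hjjm]
          have hd : A k jm jm < 0 := hdiag k jm
          have hsplit : (Function.update v jm c ᵥ* A k) jm = c * A k jm jm + S k := by
            simp only [Matrix.vecMul, dotProduct]
            rw [← Finset.add_sum_erase _ _ (Finset.mem_univ jm)]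
            congr 1
            · simp
            · refine Finset.sum_congr rfl fun i hi => ?_
              rw [Function.update_of_ne (Finset.ne_of_mem_erase hi)]
          rw [hsplit]
          have hdnpos : 0 < -(A k jm jm) := by linarith
          have := hckey k
          rw [div_lt_iff₀ hdnpos] at this
          linarith
  obtain ⟨v, hv, hvlt⟩ := main n le_rfl
  exact ⟨v, hv, fun k j => hvlt k j j.isLt⟩
end

section
/- Let A be an n×n real upper-triangular Metzler matrix with negative diagonal entries (hence invertible). Then all entries of A⁻¹ are nonpositive, the diagonal entries of A⁻¹ are negative, and for i ≠ j the entry (A⁻¹)_{ij} is nonzero (hence negative) if and only if there is a directed path from node j to node i in the directed graph of A (which has an edge from j to i whenever i ≠ j and A_{ij} ≠ 0). -/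
open Matrix

/-- For an upper-triangular Metzler matrix with negative diagonal, the inverse
is entrywise nonpositive, has negative diagonal, and its off-diagonal entry
`(i,j)` is nonzero exactly when there is a directed path from `j` to `i` in the
directed graph of `A`. -/
theorem inv_of_triangular_metzler {n : ℕ} (A : Matrix (Fin n) (Fin n) ℝ)
    (hM : IsMetzler A) (htri : ∀ i j : Fin n, j < i → A i j = 0)
    (hdiag : ∀ i, A i i < 0) :
    (∀ i j, A⁻¹ i j ≤ 0) ∧ (∀ i, A⁻¹ i i < 0) ∧
    (∀ i j, i ≠ j → (A⁻¹ i j ≠ 0 ↔ Relation.TransGen (EdgeRel A) j i)) := by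
  have hbt : A.BlockTriangular id := fun i j h => htri i j h
  have hdet : A.det = ∏ i, A i i := Matrix.det_of_upperTriangular hbt
  have hunit : IsUnit A.det := by
    rw [hdet]
    exact (Finset.prod_ne_zero_iff.mpr fun i _ => (hdiag i).ne).isUnit
  haveI : Invertible A := A.invertibleOfIsUnitDet hunit
  have hinvtri : ∀ i j : Fin n, j < i → A⁻¹ i j = 0 :=
    fun i j h => Matrix.blockTriangular_inv_of_blockTriangular hbt h
  have hmulinv : A * A⁻¹ = 1 := Matrix.mul_nonsing_inv A hunit
  have hinvmul : A⁻¹ * A = 1 := Matrix.nonsing_inv_mul A hunit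
  -- diagonal of inverse
  have hdi : ∀ i, A⁻¹ i i = (A i i)⁻¹ := by
    intro i
    have h1 : ∑ k, A⁻¹ i k * A k i = 1 := by
      have := congrFun (congrFun hinvmul i) i
      simpa [Matrix.mul_apply, Matrix.one_apply] using this
    have h2 : A⁻¹ i i * A i i = 1 := by
      rw [Fintype.sum_eq_single i (f := fun k => A⁻¹ i k * A k i) ?_] at h1
      · exact h1
      intro k hk
      rcases lt_or_gt_of_ne hk with h | h
      · show A⁻¹ i k * A k i = 0
        rw [hinvtri i k h, zero_mul]
      · show A⁻¹ i k * A k i = 0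
        rw [htri k i h, mul_zero]
    exact eq_inv_of_mul_eq_one_left h2
  have hdineg : ∀ i, A⁻¹ i i < 0 := fun i => by
    rw [hdi i]; exact inv_lt_zero.mpr (hdiag i)
  -- edges go down
  have hedge_lt : ∀ a c : Fin n, EdgeRel A a c → c < a := by
    intro a c ⟨hne, hnz⟩
    rcases lt_or_gt_of_ne hne with h | h
    · exact h
    · exact absurd (htri c a h) hnz
  have hpath_lt : ∀ a c : Fin n, Relation.TransGen (EdgeRel A) a c → c < a := by
    intro a c h
    induction h with
    | single h => exact hedge_lt _ _ h
    | tail _ h ih => exact lt_trans (hedge_lt _ _ h) ih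
  -- main induction on gap
  have main : ∀ d : ℕ, ∀ i j : Fin n, i < j → (j : ℕ) - (i : ℕ) = d →
      A⁻¹ i j ≤ 0 ∧ (A⁻¹ i j ≠ 0 ↔ Relation.TransGen (EdgeRel A) j i) := by
    intro d
    induction d using Nat.strong_induction_on with
    | _ d IH =>
      intro i j hij hd
      have h0 : ∑ k, A i k * A⁻¹ k j = 0 := by
        have := congrFun (congrFun hmulinv i) j
        simpa [Matrix.mul_apply, Matrix.one_apply, hij.ne] using this
      have hIcc : ∑ k ∈ Finset.Icc i j, A i k * A⁻¹ k j = 0 := by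
        rw [← h0]
        refine Finset.sum_subset (Finset.subset_univ _) ?_
        intro k _ hk
        rw [Finset.mem_Icc, not_and_or] at hk
        rcases hk with h | h
        · rw [htri i k (lt_of_not_ge h), zero_mul]
        · rw [hinvtri k j (lt_of_not_ge h), mul_zero]
      rw [Finset.Icc_eq_cons_Ioc hij.le, Finset.sum_cons] at hIcc
      set S := ∑ k ∈ Finset.Ioc i j, A i k * A⁻¹ k j with hS
      -- each term nonpos, and term nonzero iff both factors nonzero
      have hterm : ∀ k ∈ Finset.Ioc i j, A i k * A⁻¹ k j ≤ 0 := by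
        intro k hk
        rw [Finset.mem_Ioc] at hk
        have h1 : 0 ≤ A i k := hM i k (ne_of_lt hk.1)
        have h2 : A⁻¹ k j ≤ 0 := by
          rcases eq_or_lt_of_le hk.2 with h | h
          · subst h; exact (hdineg k).le
          · exact (IH ((j : ℕ) - (k : ℕ)) (by omega) k j h rfl).1
        exact mul_nonpos_of_nonneg_of_nonpos h1 h2
      have hSle : S ≤ 0 := Finset.sum_nonpos hterm
      have heq : A i i * A⁻¹ i j = -S := by linarith
      constructor
      · nlinarith [hdiag i, heq]
      · have hiff : A⁻¹ i j ≠ 0 ↔ S ≠ 0 := by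
          constructor
          · intro h hS0
            rw [hS0, neg_zero, mul_eq_zero] at heq
            rcases heq with h' | h'
            · exact (hdiag i).ne h'
            · exact h h'
          · intro h h0'
            rw [h0', mul_zero] at heq
            exact h (by linarith)
        rw [hiff]
        have hSz : S = 0 ↔ ∀ k ∈ Finset.Ioc i j, A i k * A⁻¹ k j = 0 :=
          Finset.sum_eq_zero_iff_of_nonpos hterm
        constructor
        · intro hSne
          obtain ⟨k, hk, hknz⟩ : ∃ k ∈ Finset.Ioc i j, A i k * A⁻¹ k j ≠ 0 := by
            by_contra h
            push_neg at h
            exact hSne (hSz.mpr h)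
          rw [Finset.mem_Ioc] at hk
          rw [mul_ne_zero_iff] at hknz
          rcases eq_or_lt_of_le hk.2 with h | h
          · subst h
            exact Relation.TransGen.single ⟨(ne_of_lt hij), hknz.1⟩
          · have hpath := ((IH ((j : ℕ) - (k : ℕ)) (by omega) k j h rfl).2).mp hknz.2
            exact hpath.tail ⟨(ne_of_lt hk.1).symm ∘ Eq.symm, hknz.1⟩
        · intro hpath hS0
          have hall := hSz.mp hS0
          cases hpath with
          | single h =>
            have : A i j * A⁻¹ j j = 0 :=
              hall j (Finset.mem_Ioc.mpr ⟨hij, le_refl j⟩)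
            rcases mul_eq_zero.mp this with h' | h'
            · exact h.2 h'
            · exact (hdineg j).ne h'
          | tail p e =>
            rename_i k
            have hik : i < k := hedge_lt k i e
            have hkj : k < j := hpath_lt j k p
            have hkinv : A⁻¹ k j ≠ 0 :=
              ((IH ((j : ℕ) - (k : ℕ)) (by omega) k j hkj rfl).2).mpr p
            have : A i k * A⁻¹ k j = 0 :=
              hall k (Finset.mem_Ioc.mpr ⟨hik, hkj.le⟩)
            rcases mul_eq_zero.mp this with h' | h'
            · exact e.2 h'
            · exact hkinv h'
  refine ⟨?_, hdineg, ?_⟩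
  · intro i j
    rcases lt_trichotomy i j with h | h | h
    · exact (main _ i j h rfl).1
    · subst h; exact (hdineg i).le
    · rw [hinvtri i j h]
  · intro i j hij
    rcases lt_or_gt_of_ne hij with h | h
    · exact (main _ i j h rfl).2
    · rw [hinvtri i j h]
      constructor
      · intro h'; exact absurd rfl h'
      · intro hp
        exact absurd (hpath_lt j i hp) (not_lt.mpr h.le)
end
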